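/- arXiv:2201.08681 — 6 statements merged into one kernel-verified Lean document; each statement's English description precedes it below -/
import Mathlib

section
/- Let κ be an infinite cardinal and assume 2^κ = κ⁺ (an instance of GCH). Then Breaker has a winning strategy in the Maker-Breaker game MB(K_{κ⁺}, K_{κ,κ⁺}), i.e. Breaker can ensure that at the end of the game the graph formed by Maker's edges contains no copy of the complete bipartite graph K_{κ,κ⁺}. -/
open Cardinal

universe u v

/-- A strategy in a transfinite positional game with moves of type `α`:
given the current turn (an ordinal) and the history of all moves made at
earlier turns, it produces a move. -/
def MBStrategy (α : Type u) : Type (u + 1) :=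
  ∀ γ : Ordinal.{u}, (∀ β : Ordinal.{u}, β < γ → α) → α

/-- A completed play of a transfinite positional game on the board `board`:
an ordinal-indexed sequence of moves, each an element of the board that was not
claimed at any earlier turn, which goes on until every element of the board has
been claimed. -/
structure MBPlay {α : Type u} (board : Set α) : Type (u + 1) where
  len : Ordinal.{u}
  move : ∀ γ : Ordinal.{u}, γ < len → α
  move_mem : ∀ γ h, move γ h ∈ board
  move_inj : ∀ γ₁ h₁ γ₂ h₂, move γ₁ h₁ = move γ₂ h₂ → γ₁ = γ₂
  complete : ∀ e ∈ board, ∃ γ h, move γ h = e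

namespace MBPlay

variable {α : Type u} {board : Set α}

/-- The set of board elements claimed at the turns satisfying `turns`. -/
def claimed (p : MBPlay board) (turns : Ordinal.{u} → Prop) : Set α :=
  {e | ∃ γ h, turns γ ∧ p.move γ h = e}

/-- The play is consistent with the player moving at the turns satisfying
`turns` using the strategy `σ`. -/
def Follows (p : MBPlay board) (turns : Ordinal.{u} → Prop) (σ : MBStrategy α) : Prop :=
  ∀ γ h, turns γ → p.move γ h = σ γ (fun β hβ => p.move β (hβ.trans h))

end MBPlay

/-- In the Maker–Breaker game the moves alternate with Maker moving first: the
turn `γ` belongs to Maker iff `γ % 2 = 0`.  In particular turn `0` and all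
limit turns belong to Maker, and Breaker answers Maker's preceding move. -/
def makerTurn (γ : Ordinal.{u}) : Prop := γ % 2 = 0

/-- The turns on which Breaker moves in the Maker–Breaker game. -/
def breakerTurn (γ : Ordinal.{u}) : Prop := γ % 2 = 1

/-- A strategy is legal for the player moving at the turns satisfying `turns`
if at every position (arising at such a turn) in which some element of the
board is still unclaimed, it produces an unclaimed element of the board. -/
def MBStrategy.IsLegal {α : Type u} (σ : MBStrategy α) (board : Set α)
    (turns : Ordinal.{u} → Prop) : Prop :=
  ∀ (γ : Ordinal.{u}) (hist : ∀ β : Ordinal.{u}, β < γ → α), turns γ →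
    (∀ β h, hist β h ∈ board) →
    (∀ β₁ h₁ β₂ h₂, hist β₁ h₁ = hist β₂ h₂ → β₁ = β₂) →
    (∃ e ∈ board, ∀ β h, hist β h ≠ e) →
    σ γ hist ∈ board ∧ ∀ β h, hist β h ≠ σ γ hist

/-- `G` contains a copy of `H`, i.e. a subgraph isomorphic to `H`; equivalently
there is an injective graph homomorphism from `H` into `G`. -/
def ContainsCopy {V : Type u} {W : Type v} (G : SimpleGraph V) (H : SimpleGraph W) : Prop :=
  ∃ f : H →g G, Function.Injective f

/-- Maker has a winning strategy in the Maker–Breaker game `MB(G, H)`: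
playing at the even turns (including turn `0` and all limit turns) of a
transfinite play on the edge set of `G`, she can ensure that whatever Breaker
does at the odd turns, at the end of the play the graph formed by her claimed
edges contains a copy of `H`. -/
def MakerWins {V : Type u} {W : Type v} (G : SimpleGraph V) (H : SimpleGraph W) : Prop :=
  ∃ σ : MBStrategy (Sym2 V), σ.IsLegal G.edgeSet makerTurn ∧
    ∀ p : MBPlay G.edgeSet, p.Follows makerTurn σ →
      ContainsCopy (SimpleGraph.fromEdgeSet (p.claimed makerTurn)) H

/-- Breaker has a winning strategy in the Maker–Breaker game `MB(G, H)`: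
playing at the odd turns of a transfinite play on the edge set of `G`, he can
ensure that at the end of the play the graph formed by Maker's claimed edges
does not contain a copy of `H`. -/
def BreakerWins {V : Type u} {W : Type v} (G : SimpleGraph V) (H : SimpleGraph W) : Prop :=
  ∃ σ : MBStrategy (Sym2 V), σ.IsLegal G.edgeSet breakerTurn ∧
    ∀ p : MBPlay G.edgeSet, p.Follows breakerTurn σ →
      ¬ ContainsCopy (SimpleGraph.fromEdgeSet (p.claimed makerTurn)) H


lemma breakerTurn_add_one {γ : Ordinal.{u}} (h : makerTurn γ) : breakerTurn (γ + 1) := by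
  unfold makerTurn at h
  unfold breakerTurn
  have hd := Ordinal.div_add_mod γ 2
  rw [h, add_zero] at hd
  calc (γ + 1) % 2 = (2 * (γ / 2) + 1) % 2 := by rw [hd]
    _ = 1 % 2 := Ordinal.mul_add_mod_self 2 (γ/2) 1
    _ = 1 := Ordinal.mod_eq_of_lt one_lt_two

lemma makerTurn_not_breakerTurn {γ : Ordinal.{u}} (h : makerTurn γ)
    (h' : breakerTurn γ) : False := by
  unfold makerTurn at h; unfold breakerTurn at h'
  exact zero_ne_one (h.symm.trans h')

section BreakerAux
attribute [local instance] Classical.propDecidable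

variable {V : Type u} {W : Type u} {T : Type u}

/-- higher endpoint of an edge -/
def ehigh [LinearOrder V] (e : Sym2 V) : V :=
  Sym2.lift ⟨fun x y => max x y, fun x y => max_comm x y⟩ e

@[simp] lemma ehigh_mk [LinearOrder V] (x y : V) : ehigh s(x, y) = max x y := rfl

/-- edges claimed in a history -/
def hClaimed {γ : Ordinal.{u}} (hist : ∀ β, β < γ → Sym2 V) : Set (Sym2 V) :=
  {e | ∃ β h, hist β h = e}

/-- edges claimed at breaker turns in a history -/
def hBClaimed {γ : Ordinal.{u}} (hist : ∀ β, β < γ → Sym2 V) : Set (Sym2 V) :=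
  {e | ∃ β h, breakerTurn β ∧ hist β h = e}

/-- available (unfinished, unblocked, still blockable) tasks at the vertex `w` -/
def availSet (j : V → W) (A : W → Set V) [LinearOrder W]
    {γ : Ordinal.{u}} (hist : ∀ β, β < γ → Sym2 V) (w : V) : Set W :=
  {α | α < j w ∧ (∃ a, a ∈ A α ∧ s(w, a) ∉ hClaimed hist) ∧
    ¬ ∃ a, a ∈ A α ∧ s(w, a) ∈ hBClaimed hist}

/-- fallback move: any unclaimed edge of the complete graph -/
noncomputable def bfallback [Nonempty V] {γ : Ordinal.{u}}
    (hist : ∀ β, β < γ → Sym2 V) : Sym2 V :=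
  if h : ∃ e, e ∈ (⊤ : SimpleGraph V).edgeSet ∧ e ∉ hClaimed hist then h.choose
  else s(Classical.arbitrary V, Classical.arbitrary V)

/-- the core of Breaker's strategy: block a task of least priority value at `w` -/
noncomputable def bstratCore [Nonempty V] [LinearOrder V] [LinearOrder W]
    [LinearOrder T] (j : V → W) (A : W → Set V) (E : V → W → T)
    {γ : Ordinal.{u}} (hist : ∀ β, β < γ → Sym2 V) (w : V) : Sym2 V :=
  if hA : ∃ α, α ∈ availSet j A hist w ∧ ∀ α', α' ∈ availSet j A hist w →
      ¬ E w α' < E w α then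
    if ha : ∃ a, a ∈ A hA.choose ∧ s(w, a) ∉ hClaimed hist then s(w, ha.choose)
    else bfallback hist
  else bfallback hist

/-- Breaker's strategy -/
noncomputable def bstrat [Nonempty V] [LinearOrder V] [LinearOrder W]
    [LinearOrder T] (j : V → W) (A : W → Set V) (E : V → W → T) :
    MBStrategy (Sym2 V) := fun γ hist =>
  if hδ : Ordinal.pred γ < γ then bstratCore j A E hist (ehigh (hist _ hδ))
  else bfallback hist

lemma bfallback_spec [Nonempty V] {γ : Ordinal.{u}} (hist : ∀ β, β < γ → Sym2 V)
    (hex : ∃ e, e ∈ (⊤ : SimpleGraph V).edgeSet ∧ e ∉ hClaimed hist) :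
    bfallback hist ∈ (⊤ : SimpleGraph V).edgeSet ∧ bfallback hist ∉ hClaimed hist := by
  rw [bfallback, dif_pos hex]; exact hex.choose_spec

lemma notMem_hClaimed_iff {γ : Ordinal.{u}} (hist : ∀ β, β < γ → Sym2 V) (e : Sym2 V) :
    e ∉ hClaimed hist ↔ ∀ β h, hist β h ≠ e := by
  simp [hClaimed]

lemma bstrat_isLegal [Nonempty V] [LinearOrder V] [LinearOrder W] [LinearOrder T]
    (j : V → W) (A : W → Set V) (E : V → W → T)
    (hjA : ∀ i, ∀ x ∈ A i, j x < i) :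
    (bstrat j A E).IsLegal (⊤ : SimpleGraph V).edgeSet breakerTurn := by
  intro γ hist _ _ _ hex
  have hex' : ∃ e, e ∈ (⊤ : SimpleGraph V).edgeSet ∧ e ∉ hClaimed hist := by
    obtain ⟨e, he, hu⟩ := hex
    exact ⟨e, he, (notMem_hClaimed_iff hist e).mpr hu⟩
  have goal : ∀ e : Sym2 V, e ∈ (⊤ : SimpleGraph V).edgeSet ∧ e ∉ hClaimed hist →
      e ∈ (⊤ : SimpleGraph V).edgeSet ∧ ∀ β h, hist β h ≠ e := by
    rintro e ⟨h1, h2⟩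
    exact ⟨h1, (notMem_hClaimed_iff hist e).mp h2⟩
  rw [bstrat]
  split
  · rw [bstratCore]
    split
    · rename_i hA
      split
      · rename_i ha
        apply goal
        refine ⟨?_, ha.choose_spec.2⟩
        rw [SimpleGraph.mem_edgeSet, SimpleGraph.top_adj]
        intro hEq
        have h1 : hA.choose < j (ehigh (hist _ ‹Ordinal.pred γ < γ›)) :=
          hA.choose_spec.1.1
        have h2 := hjA _ _ ha.choose_spec.1
        exact lt_irrefl _ ((h2.trans h1).trans_eq (congrArg j hEq))
      · exact goal _ (bfallback_spec hist hex')
    · exact goal _ (bfallback_spec hist hex')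
  · exact goal _ (bfallback_spec hist hex')

lemma bstratCore_spec [Nonempty V] [LinearOrder V] [LinearOrder W]
    [LinearOrder T] [WellFoundedLT T] (j : V → W) (A : W → Set V) (E : V → W → T)
    {γ : Ordinal.{u}} (hist : ∀ β, β < γ → Sym2 V) (w : V)
    (hne : (availSet j A hist w).Nonempty) :
    ∃ α ∈ availSet j A hist w, (∀ α' ∈ availSet j A hist w, ¬ E w α' < E w α) ∧
      ∃ a, a ∈ A α ∧ s(w, a) ∉ hClaimed hist ∧ bstratCore j A E hist w = s(w, a) := by
  have hA : ∃ α, α ∈ availSet j A hist w ∧ ∀ α', α' ∈ availSet j A hist w →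
      ¬ E w α' < E w α := by
    obtain ⟨t, ⟨α, hα, rfl⟩, hmin⟩ :=
      (wellFounded_lt (α := T)).has_min (E w '' availSet j A hist w)
        (hne.image _)
    exact ⟨α, hα, fun α' hα' hlt => hmin _ (Set.mem_image_of_mem _ hα') hlt⟩
  rw [bstratCore, dif_pos hA]
  have hα := hA.choose_spec
  have ha : ∃ a, a ∈ A hA.choose ∧ s(w, a) ∉ hClaimed hist := hα.1.2.1
  rw [dif_pos ha]
  exact ⟨hA.choose, hα.1, hα.2, ha.choose, ha.choose_spec.1, ha.choose_spec.2, rfl⟩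

lemma congr_hist {Γ γ γ' : Ordinal.{u}} (hist : ∀ β, β < Γ → Sym2 V)
    (e : γ = γ') (h : γ < Γ) (h' : γ' < Γ) : hist γ h = hist γ' h' := by cases e; rfl

lemma bstrat_succ [Nonempty V] [LinearOrder V] [LinearOrder W] [LinearOrder T]
    (j : V → W) (A : W → Set V) (E : V → W → T) (γ : Ordinal.{u})
    (hist : ∀ β, β < γ + 1 → Sym2 V) (hγ : γ < γ + 1) :
    bstrat j A E (γ + 1) hist = bstratCore j A E hist (ehigh (hist γ hγ)) := by
  have hp : Ordinal.pred (γ + 1) = γ := by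
    rw [Ordinal.add_one_eq_succ, Ordinal.pred_succ]
  have hδ : Ordinal.pred (γ + 1) < γ + 1 := by rw [hp]; exact hγ
  rw [bstrat, dif_pos hδ, congr_hist hist hp hδ hγ]

end BreakerAux

/-- Let `κ` be an infinite cardinal with `2 ^ κ = κ⁺` (an instance
of GCH).  Then Breaker has a winning strategy in the Maker–Breaker game
`MB(K_{κ⁺}, K_{κ,κ⁺})`: on the complete graph on `κ⁺` vertices he can ensure
that Maker's graph contains no copy of the complete bipartite graph with
classes of sizes `κ` and `κ⁺`. -/
theorem breakerWins_complete_succ_vs_completeBipartite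
    (κ : Cardinal.{u}) (hκ : ℵ₀ ≤ κ) (hGCH : 2 ^ κ = Order.succ κ)
    (V A B : Type u) (hV : #V = Order.succ κ) (hA : #A = κ) (hB : #B = Order.succ κ) :
    BreakerWins (⊤ : SimpleGraph V) (completeBipartiteGraph A B) := by
  classical
  have hμ : ℵ₀ ≤ Order.succ κ := hκ.trans (Order.le_succ κ)
  have hκpos : κ ≠ 0 := (aleph0_pos.trans_le hκ).ne'
  haveI hVne : Nonempty V := Cardinal.mk_ne_zero_iff.mp
    (by rw [hV]; exact (aleph0_pos.trans_le hμ).ne')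
  set W := (Order.succ κ).ord.ToType with hWdef
  have hWcard : #W = Order.succ κ := by rw [Cardinal.mk_toType, Cardinal.card_ord]
  obtain ⟨g⟩ : Nonempty (V ≃ W) := Cardinal.eq.mp (hV.trans hWcard.symm)
  letI : LinearOrder V := LinearOrder.lift' g g.injective
  have hltV : ∀ x y : V, g x < g y → x < y := fun _ _ h => h
  set T := κ.ord.ToType with hTdef
  have hTcard : #T = κ := by rw [Cardinal.mk_toType, Cardinal.card_ord]
  haveI hTne : Nonempty T := Ordinal.toType_nonempty_iff_ne_zero.mpr
    (fun h0 => hκpos (Cardinal.ord_eq_zero.mp h0))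
  -- initial segments of W are small
  have hIio : ∀ b : W, #(Set.Iio b) ≤ κ :=
    fun b => Order.lt_succ_iff.mp (Cardinal.mk_Iio_ord_toType b)
  have hIic : ∀ b : W, #(Set.Iic b) ≤ κ := by
    intro b
    rw [← Set.Iio_insert]
    refine le_trans Cardinal.mk_insert_le ?_
    calc #(Set.Iio b) + 1 ≤ κ + 1 := add_le_add_left (hIio b) 1
      _ = κ := Cardinal.add_one_eq hκ
  -- every κ-small subset of V is bounded in the well-order
  have hbnd : ∀ S : Set V, #S ≤ κ → ∃ b : W, ∀ x ∈ S, g x < b := by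
    intro S hS
    by_contra hcon
    push_neg at hcon
    have hsub : (Set.univ : Set W) ⊆ ⋃ x : S, Set.Iic (g x.1) := by
      intro b _
      obtain ⟨x, hx, hbx⟩ := hcon b
      exact Set.mem_iUnion.mpr ⟨⟨x, hx⟩, hbx⟩
    have hle : #(Set.univ : Set W) ≤ #S * ⨆ x : S, #(Set.Iic (g x.1)) :=
      le_trans (Cardinal.mk_le_mk_of_subset hsub) (Cardinal.mk_iUnion_le _)
    have h2 : (⨆ x : S, #(Set.Iic (g x.1))) ≤ κ := ciSup_le' fun x => hIic _
    have h3 : Order.succ κ ≤ κ * κ := by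
      calc Order.succ κ = #W := hWcard.symm
        _ = #(Set.univ : Set W) := Cardinal.mk_univ.symm
        _ ≤ #S * ⨆ x : S, #(Set.Iic (g x.1)) := hle
        _ ≤ κ * κ := mul_le_mul' hS h2
    rw [Cardinal.mul_eq_self hκ] at h3
    exact absurd h3 (Order.lt_succ κ).not_ge
  -- enumeration of all κ-sized subsets of V
  have hTsetCard : #{S : Set V // #S = κ} ≤ Order.succ κ := by
    have h1 : ∀ S : {S : Set V // #S = κ}, Nonempty (T ≃ S.1) :=
      fun S => Cardinal.eq.mp (hTcard.trans S.2.symm)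
    have hr : ∀ S : {S : Set V // #S = κ},
        Set.range (fun i : T => (Classical.choice (h1 S) i : V)) = S.1 := by
      intro S
      ext x
      constructor
      · rintro ⟨i, rfl⟩; exact (Classical.choice (h1 S) i).2
      · intro hx
        exact ⟨(Classical.choice (h1 S)).symm ⟨x, hx⟩, by simp⟩
    have hinj : Function.Injective
        (fun S : {S : Set V // #S = κ} => (fun i : T => (Classical.choice (h1 S) i : V))) := by
      intro S S' hSS
      apply Subtype.ext
      rw [← hr S, ← hr S']
      exact congrArg Set.range hSS
    calc #{S : Set V // #S = κ} ≤ #(T → V) := Cardinal.mk_le_of_injective hinj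
      _ = #V ^ #T := (Cardinal.power_def V T).symm
      _ = (Order.succ κ) ^ κ := by rw [hV, hTcard]
      _ ≤ (2 ^ κ) ^ κ := power_le_power_right (le_of_eq hGCH.symm)
      _ = 2 ^ (κ * κ) := (Cardinal.power_mul).symm
      _ = 2 ^ κ := by rw [Cardinal.mul_eq_self hκ]
      _ = Order.succ κ := hGCH
  obtain ⟨S₀, hS₀⟩ : ∃ S : Set V, #S = κ :=
    Cardinal.le_mk_iff_exists_set.mp (by rw [hV]; exact Order.le_succ κ)
  haveI : Nonempty {S : Set V // #S = κ} := ⟨⟨S₀, hS₀⟩⟩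
  obtain ⟨emb⟩ : Nonempty ({S : Set V // #S = κ} ↪ W) :=
    (Cardinal.le_def _ _).mp (by rw [hWcard]; exact hTsetCard)
  set q : W → {S : Set V // #S = κ} := Function.invFun emb with hqdef
  have hq : Function.Surjective q := Function.invFun_surjective emb.injective
  obtain ⟨P⟩ : Nonempty (W ≃ W × W) := Cardinal.eq.mp (show #W = #(W × W) by
    rw [← Cardinal.mul_def, hWcard, Cardinal.mul_eq_self hμ])
  set En : W → Set V :=
    fun i => if ∀ x ∈ (q (P i).2).1, g x < i then (q (P i).2).1 else ∅ with hEndef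
  have hEnlt : ∀ i, ∀ x ∈ En i, g x < i := by
    intro i x hx
    by_cases h : ∀ x ∈ (q (P i).2).1, g x < i
    · simp only [hEndef, if_pos h] at hx; exact h x hx
    · simp only [hEndef, if_neg h] at hx; exact absurd hx (Set.notMem_empty x)
  have hEnSurj : ∀ S : Set V, #S = κ → ∃ i, En i = S := by
    intro S hS
    obtain ⟨i₂, hi₂⟩ := hq ⟨S, hS⟩
    obtain ⟨b, hb⟩ := hbnd S (le_of_eq hS)
    have hbig : ∃ y : W, b ≤ P.symm (y, i₂) := by
      by_contra hcon
      push_neg at hcon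
      have hinj : Function.Injective
          (fun y : W => (⟨P.symm (y, i₂), hcon y⟩ : Set.Iio b)) := by
        intro y y' hyy
        have h1 : P.symm (y, i₂) = P.symm (y', i₂) := congrArg Subtype.val hyy
        have h2 : (y, i₂) = (y', i₂) := P.symm.injective h1
        exact (Prod.ext_iff.mp h2).1
      have h3 : Order.succ κ ≤ κ :=
        (hWcard.symm.trans_le (Cardinal.mk_le_of_injective hinj)).trans (hIio b)
      exact absurd h3 (Order.lt_succ κ).not_ge
    obtain ⟨y, hy⟩ := hbig
    refine ⟨P.symm (y, i₂), ?_⟩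
    have h2 : (P (P.symm (y, i₂))).2 = i₂ := by rw [P.apply_symm_apply]
    have hcond : ∀ x ∈ (q (P (P.symm (y, i₂))).2).1, g x < P.symm (y, i₂) := by
      rw [h2, hi₂]
      exact fun x hx => lt_of_lt_of_le (hb x hx) hy
    simp only [hEndef, if_pos hcond]
    rw [h2, hi₂]
  -- priority injections
  have hEemb : ∀ w : V, Nonempty (Set.Iio (g w) ↪ T) :=
    fun w => (Cardinal.le_def _ _).mp (by rw [hTcard]; exact hIio (g w))
  set E : V → W → T := fun w i =>
    if h : i < g w then (Classical.choice (hEemb w)) ⟨i, h⟩ else Classical.arbitrary T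
    with hEdef
  have hEinj : ∀ w : V, ∀ i ∈ Set.Iio (g w), ∀ i' ∈ Set.Iio (g w),
      E w i = E w i' → i = i' := by
    intro w i hi i' hi' heq
    simp only [hEdef, dif_pos (Set.mem_Iio.mp hi), dif_pos (Set.mem_Iio.mp hi')] at heq
    have := (Classical.choice (hEemb w)).injective heq
    exact congrArg Subtype.val this
  -- the strategy
  refine ⟨bstrat (⇑g) En E, bstrat_isLegal (⇑g) En E hEnlt, ?_⟩
  intro p hFollows hCopy
  obtain ⟨f, hf⟩ := hCopy
  set S : Set V := Set.range (f ∘ Sum.inl) with hSdef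
  have hScard : #S = κ := by
    rw [hSdef, Cardinal.mk_range_eq _ (hf.comp Sum.inl_injective), hA]
  obtain ⟨i₀, hi₀⟩ := hEnSurj S hScard
  have hadj : ∀ (x : A) (y : B),
      s(f (Sum.inr y), f (Sum.inl x)) ∈ p.claimed makerTurn := by
    intro x y
    have h0 : (completeBipartiteGraph A B).Adj (Sum.inr y) (Sum.inl x) := by simp
    have h1 := f.map_adj h0
    rw [SimpleGraph.fromEdgeSet_adj] at h1
    exact h1.1
  have hmcongr : ∀ γ γ' (e : γ = γ') (h : γ < p.len) (h' : γ' < p.len),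
      p.move γ h = p.move γ' h' := by
    intro γ γ' e h h'; cases e; rfl
  -- the key claim : every vertex fully joined to S has small index
  have key : ∀ w : V, (∀ a ∈ S, s(w, a) ∈ p.claimed makerTurn) → ¬ i₀ < g w := by
    intro w hw hl0
    have haS : ∀ a ∈ S, g a < i₀ := fun a ha => hEnlt i₀ a (hi₀ ▸ ha)
    by_cases hB : ∃ a ∈ S, ∃ β hβ, breakerTurn β ∧ p.move β hβ = s(w, a)
    · obtain ⟨a, haSm, β, hβ, hbt, hbe⟩ := hB
      obtain ⟨γ', hγ', hmt, hme⟩ := hw a haSm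
      have he : β = γ' := p.move_inj β hβ γ' hγ' (hbe.trans hme.symm)
      exact makerTurn_not_breakerTurn hmt (he ▸ hbt)
    · push_neg at hB
      choose φ hφlt hφm hφe using fun a : S => hw a.1 a.2
      have hφinj : Function.Injective φ := by
        intro a b hab
        have h1 : p.move (φ b) (hφlt b) = s(w, a.1) :=
          (hmcongr _ _ hab.symm _ _).trans (hφe a)
        have h2 : s(w, a.1) = s(w, b.1) := h1.symm.trans (hφe b)
        exact Subtype.ext (Sym2.congr_right.mp h2)
      set S' : Set S := {a | ∃ b : S, φ a < φ b} with hS'def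
      have hS'card : κ ≤ #S' := by
        by_contra hcon
        push_neg at hcon
        obtain ⟨a₀, ha₀⟩ : ∃ a₀ : S, a₀ ∉ S' := by
          by_contra hall
          push_neg at hall
          rw [Set.eq_univ_of_forall hall] at hcon
          exact absurd (Cardinal.mk_univ.trans hScard) hcon.ne
        have hsub : (Set.univ : Set S) ⊆ insert a₀ S' := by
          intro a _
          by_cases h : a = a₀
          · exact Set.mem_insert_iff.mpr (Or.inl h)
          · refine Set.mem_insert_iff.mpr (Or.inr ?_)
            have hne : φ a ≠ φ a₀ := fun e => h (hφinj e)
            have hnlt : ¬ φ a₀ < φ a := fun hlt => ha₀ ⟨a, hlt⟩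
            exact ⟨a₀, hne.lt_or_gt.resolve_right hnlt⟩
        have hchain : κ ≤ #S' + 1 := by
          calc κ = #S := hScard.symm
            _ = #(Set.univ : Set S) := Cardinal.mk_univ.symm
            _ ≤ #(insert a₀ S' : Set S) := Cardinal.mk_le_mk_of_subset hsub
            _ ≤ #S' + 1 := Cardinal.mk_insert_le
        exact absurd hchain
          (Cardinal.add_lt_of_lt hκ hcon (one_lt_aleph0.trans_le hκ)).not_ge
      -- at each relevant breaker turn, the strategy blocks a task of smaller
      -- priority than the task `i₀`
      have key2 : ∀ a : S', ∃ α : W, α ∈ Set.Iio (g w) ∧ E w α < E w i₀ ∧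
          ∃ a' : V, a' ∈ En α ∧ ∃ (hh : φ a.1 + 1 < p.len),
            breakerTurn (φ a.1 + 1) ∧ p.move (φ a.1 + 1) hh = s(w, a') ∧
            ∀ x ∈ En α, ∀ β (hβ2 : β < p.len), β < φ a.1 + 1 → breakerTurn β →
              p.move β hβ2 ≠ s(w, x) := by
        intro a
        obtain ⟨b, hb⟩ := a.2
        have hγ1 : φ a.1 < φ a.1 + 1 := by
          rw [Ordinal.add_one_eq_succ]; exact Order.lt_succ (φ a.1)
        have hsucc_le : φ a.1 + 1 ≤ φ b := by
          rw [Ordinal.add_one_eq_succ]; exact Order.succ_le_of_lt hb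
        have hh : φ a.1 + 1 < p.len := lt_of_le_of_lt hsucc_le (hφlt b)
        have hbt : breakerTurn (φ a.1 + 1) := breakerTurn_add_one (hφm a.1)
        have hmv := hFollows (φ a.1 + 1) hh hbt
        set hist : ∀ β, β < φ a.1 + 1 → Sym2 V :=
          fun β hβ => p.move β (hβ.trans hh) with histdef
        have hwa : a.1.1 < w := hltV _ _ ((haS _ a.1.2).trans hl0)
        have hhist : hist (φ a.1) hγ1 = s(w, a.1.1) := by
          rw [histdef]
          exact (hmcongr _ _ rfl _ _).trans (hφe a.1)
        have hehigh : ehigh (hist (φ a.1) hγ1) = w := by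
          rw [hhist, ehigh_mk]
          exact max_eq_left hwa.le
        have havail : i₀ ∈ availSet (⇑g) En hist w := by
          refine ⟨hl0, ⟨b.1, hi₀.symm ▸ b.2, ?_⟩, ?_⟩
          · intro hcl
            obtain ⟨β, hβ, he⟩ := hcl
            have heq : β = φ b := p.move_inj β (hβ.trans hh) (φ b) (hφlt b)
              (he.trans (hφe b).symm)
            rw [heq] at hβ
            exact absurd hβ (not_lt.mpr hsucc_le)
          · rintro ⟨x, hx, β, hβ, hbtx, hex⟩
            exact hB x (hi₀ ▸ hx) β (hβ.trans hh) hbtx hex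
        obtain ⟨α, hαav, hαmin, a', ha'A, ha'uncl, hceq⟩ :=
          bstratCore_spec (⇑g) En E hist w ⟨i₀, havail⟩
        have hmv2 : p.move (φ a.1 + 1) hh = s(w, a') := by
          rw [hmv, bstrat_succ (⇑g) En E (φ a.1) hist hγ1, hehigh]
          exact hceq
        have hav1 : α ∈ Set.Iio (g w) := Set.mem_Iio.mpr hαav.1
        have hαne : α ≠ i₀ := by
          intro he
          exact hB a' (by rw [← hi₀, ← he]; exact ha'A) (φ a.1 + 1) hh hbt hmv2
        have hαlt : E w α < E w i₀ := by
          have h1 : ¬ E w i₀ < E w α := hαmin i₀ havail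
          have h2 : E w α ≠ E w i₀ :=
            fun he => hαne (hEinj w α hav1 i₀ (Set.mem_Iio.mpr hl0) he)
          exact h2.lt_or_gt.resolve_right h1
        refine ⟨α, hav1, hαlt, a', ha'A, hh, hbt, hmv2, ?_⟩
        intro x hx β hβ2 hβlt hbtβ hexx
        exact hαav.2.2 ⟨x, hx, β, hβlt, hbtβ, (hmcongr β β rfl _ _).trans hexx⟩
      choose Λ hΛIio hΛE aa haaEn hhh hbtt hmvv hnopr using key2
      -- the assignment of blocked tasks is injective
      have hord : ∀ a b : S', Λ a = Λ b → φ a.1 < φ b.1 → False := by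
        intro a b hab hlt
        refine hnopr b (aa a) (hab ▸ haaEn a) (φ a.1 + 1) (hhh a) ?_ (hbtt a) (hmvv a)
        rw [Ordinal.add_one_eq_succ, Ordinal.add_one_eq_succ]
        exact Order.succ_lt_succ hlt
      have hinjΛ : Function.Injective
          (fun a : S' => (⟨E w (Λ a), Set.mem_Iio.mpr (hΛE a)⟩ : Set.Iio (E w i₀))) := by
        intro a b hab
        have h1 : E w (Λ a) = E w (Λ b) := congrArg Subtype.val hab
        have h2 : Λ a = Λ b := hEinj w (Λ a) (hΛIio a) (Λ b) (hΛIio b) h1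
        have h3 : φ a.1 = φ b.1 := by
          rcases lt_trichotomy (φ a.1) (φ b.1) with h | h | h
          · exact (hord a b h2 h).elim
          · exact h
          · exact (hord b a h2.symm h).elim
        exact Subtype.ext (hφinj h3)
      have hfin : κ ≤ #(Set.Iio (E w i₀)) :=
        hS'card.trans (Cardinal.mk_le_of_injective hinjΛ)
      exact absurd hfin (Cardinal.mk_Iio_ord_toType (E w i₀)).not_ge
  -- conclusion : B is too small
  have hle : ∀ y : B, g (f (Sum.inr y)) ≤ i₀ := by
    intro y
    have hcl : ∀ a ∈ S, s(f (Sum.inr y), a) ∈ p.claimed makerTurn := by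
      rintro a ⟨x, rfl⟩
      exact hadj x y
    exact not_lt.mp (key _ hcl)
  have hinj2 : Function.Injective
      (fun y : B => (⟨g (f (Sum.inr y)), hle y⟩ : Set.Iic i₀)) := by
    intro y y' h
    have h1 := congrArg Subtype.val h
    exact Sum.inr_injective (hf (g.injective h1))
  have hfinal : Order.succ κ ≤ κ := by
    calc Order.succ κ = #B := hB.symm
      _ ≤ #(Set.Iic i₀) := Cardinal.mk_le_of_injective hinj2
      _ ≤ κ := hIic i₀
  exact absurd hfinal (Order.lt_succ κ).not_ge
end

section
/- Let κ be an infinite cardinal and assume 2^κ = κ⁺ (an instance of GCH). Then there exists a 2-colouring of the edge set of the complete bipartite graph K_{κ,κ⁺} such that no colour class contains a copy of K_{κ,κ⁺}. -/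
open Cardinal

universe u v

/-- The graph formed by the edges of `G` that receive colour `i` under the
edge-colouring `c`. -/
def colourClass {V : Type u} (G : SimpleGraph V) (c : G.edgeSet → Bool) (i : Bool) :
    SimpleGraph V :=
  SimpleGraph.fromEdgeSet {e : Sym2 V | ∃ h : e ∈ G.edgeSet, c ⟨e, h⟩ = i}


lemma exists_nonconstant {κ : Cardinal.{u}} (hκ : ℵ₀ ≤ κ) {A I : Type u}
    (ι : I → κ.ord.ToType) (hι : Function.Injective ι)
    (S : I → Set A) (hS : ∀ i, κ ≤ #(S i)) :
    ∃ f : A → Bool, ∀ i, ∃ x ∈ S i, ∃ y ∈ S i, f x ≠ f y := by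
  classical
  set r : I → I → Prop := fun i j => ι i < ι j with hr
  have wf : WellFounded r := InvImage.wf ι wellFounded_lt
  have hseg : ∀ i : I, #{j : I // r j i} < κ := by
    intro i
    have h1 : #{j : I // r j i} ≤ #(Set.Iio (ι i)) := by
      refine mk_le_of_injective (f := fun j => (⟨ι j.1, j.2⟩ : Set.Iio (ι i))) ?_
      intro a b h
      exact Subtype.ext (hι (congrArg Subtype.val h))
    exact h1.trans_lt (Cardinal.mk_Iio_ord_toType (ι i))
  have key : ∀ (i : I) (rec : ∀ j, r j i → A × A),
      ∃ z : A × A, z.1 ∈ S i ∧ z.2 ∈ S i ∧ z.1 ≠ z.2 ∧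
        ∀ j (h : r j i), z.1 ≠ (rec j h).1 ∧ z.1 ≠ (rec j h).2 ∧
          z.2 ≠ (rec j h).1 ∧ z.2 ≠ (rec j h).2 := by
    intro i rec
    set prev : Set A := ⋃ (j : {j : I // r j i}), {(rec j.1 j.2).1, (rec j.1 j.2).2} with hprevdef
    have hprev : #prev < κ := by
      have h1 : #prev ≤ #{j : I // r j i} * 2 := by
        refine (Cardinal.mk_iUnion_le _).trans ?_
        refine mul_le_mul_right ?_ _
        refine ciSup_le' fun j => ?_
        refine (Cardinal.mk_insert_le ..).trans ?_
        rw [Cardinal.mk_singleton, one_add_one_eq_two]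
      refine h1.trans_lt (Cardinal.mul_lt_of_lt hκ (hseg i) ?_)
      have h2 : ((2 : ℕ) : Cardinal) < ℵ₀ := nat_lt_aleph0 2
      exact lt_of_lt_of_le (by exact_mod_cast h2) hκ
    have hbig : κ ≤ #(S i \ prev : Set A) := by
      by_contra hlt
      push_neg at hlt
      have h2 : #(S i) ≤ #(S i \ prev : Set A) + #prev := by
        refine (Cardinal.mk_le_mk_of_subset (Set.subset_diff_union (S i) prev)).trans ?_
        exact Cardinal.mk_union_le _ _
      exact absurd ((hS i).trans h2) (not_le.2 (Cardinal.add_lt_of_lt hκ hlt hprev))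
    have hnt : (1 : Cardinal) < #(S i \ prev : Set A) :=
      lt_of_lt_of_le (lt_of_lt_of_le Cardinal.one_lt_aleph0 hκ) hbig
    rw [Cardinal.one_lt_iff_nontrivial] at hnt
    obtain ⟨⟨x, hx⟩, ⟨y, hy⟩, hxy⟩ := hnt
    have hxy' : x ≠ y := fun h => hxy (Subtype.ext h)
    have notmem : ∀ z ∈ (S i \ prev : Set A), ∀ j (h : r j i),
        z ≠ (rec j h).1 ∧ z ≠ (rec j h).2 := by
      intro z hz j h
      have h2 := hz.2
      rw [hprevdef] at h2
      simp only [Set.mem_iUnion, not_exists, Set.mem_insert_iff, Set.mem_singleton_iff] at h2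
      have h3 := h2 ⟨j, h⟩
      push_neg at h3
      exact h3
    refine ⟨(x, y), hx.1, hy.1, hxy', fun j h => ?_⟩
    obtain ⟨h1, h2⟩ := notmem x hx j h
    obtain ⟨h3, h4⟩ := notmem y hy j h
    exact ⟨h1, h2, h3, h4⟩
  set P : I → A × A := wf.fix (fun i rec => Classical.choose (key i rec)) with hPdef
  have hP : ∀ i, (P i).1 ∈ S i ∧ (P i).2 ∈ S i ∧ (P i).1 ≠ (P i).2 ∧
      ∀ j (h : r j i), (P i).1 ≠ (P j).1 ∧ (P i).1 ≠ (P j).2 ∧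
        (P i).2 ≠ (P j).1 ∧ (P i).2 ≠ (P j).2 := by
    intro i
    have heq : P i = Classical.choose (key i (fun j _ => P j)) := by
      rw [hPdef]
      exact WellFounded.fix_eq wf _ i
    rw [heq]
    exact Classical.choose_spec (key i (fun j _ => P j))
  set p : I × Bool → A := fun ib => if ib.2 = true then (P ib.1).1 else (P ib.1).2 with hpdef
  have hp1 : ∀ i : I, p (i, true) = (P i).1 := fun i => if_pos rfl
  have hp2 : ∀ i : I, p (i, false) = (P i).2 := fun i => if_neg (by simp)
  have hpmem : ∀ ib, p ib ∈ S ib.1 := by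
    rintro ⟨i, b⟩
    cases b
    · rw [hp2]; exact (hP i).2.1
    · rw [hp1]; exact (hP i).1
  have hpinj : Function.Injective p := by
    rintro ⟨i, b⟩ ⟨i', b'⟩ h
    rcases eq_or_ne i i' with rfl | hne
    · cases b <;> cases b'
      · rfl
      · rw [hp2, hp1] at h; exact absurd h.symm (hP i).2.2.1
      · rw [hp1, hp2] at h; exact absurd h (hP i).2.2.1
      · rfl
    · exfalso
      have htri : r i i' ∨ r i' i := by
        rcases lt_trichotomy (ι i) (ι i') with h' | h' | h'
        · exact Or.inl h'
        · exact absurd (hι h') hne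
        · exact Or.inr h'
      rcases htri with h' | h'
      · have hd := (hP i').2.2.2 i h'
        cases b <;> cases b'
        · rw [hp2, hp2] at h; exact hd.2.2.2 h.symm
        · rw [hp2, hp1] at h; exact hd.2.1 h.symm
        · rw [hp1, hp2] at h; exact hd.2.2.1 h.symm
        · rw [hp1, hp1] at h; exact hd.1 h.symm
      · have hd := (hP i).2.2.2 i' h'
        cases b <;> cases b'
        · rw [hp2, hp2] at h; exact hd.2.2.2 h
        · rw [hp2, hp1] at h; exact hd.2.2.1 h
        · rw [hp1, hp2] at h; exact hd.2.1 h
        · rw [hp1, hp1] at h; exact hd.1 h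
  set f : A → Bool := fun a => if h : ∃ ib, p ib = a then (Classical.choose h).2 else true
    with hfdef
  have hval : ∀ ib : I × Bool, f (p ib) = ib.2 := by
    intro ib
    have h : ∃ ib', p ib' = p ib := ⟨ib, rfl⟩
    rw [hfdef]
    simp only []
    rw [dif_pos h]
    have hspec := Classical.choose_spec h
    rw [hpinj hspec]
  refine ⟨f, fun i => ?_⟩
  refine ⟨p (i, true), hpmem (i, true), p (i, false), hpmem (i, false), ?_⟩
  rw [hval (i, true), hval (i, false)]
  simp

lemma exists_good_colouring (κ : Cardinal.{u}) (hκ : ℵ₀ ≤ κ)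
    (hGCH : 2 ^ κ = Order.succ κ) (A B : Type u) (hA : #A = κ)
    (hB : #B = Order.succ κ) :
    ∃ c : A → B → Bool, ∀ A' : Set A, κ ≤ #A' → ∀ B' : Set B, Order.succ κ ≤ #B' →
      ∃ b ∈ B', ∃ a₁ ∈ A', ∃ a₂ ∈ A', c a₁ b ≠ c a₂ b := by
  classical
  set β := (Order.succ κ).ord.ToType with hβdef
  have hβ : #β = Order.succ κ := by rw [hβdef, Cardinal.mk_toType, Cardinal.card_ord]
  obtain ⟨ψ⟩ : Nonempty (B ≃ β) := Cardinal.eq.1 (hB.trans hβ.symm)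
  obtain ⟨e⟩ : Nonempty (β ≃ Set A) := by
    refine Cardinal.eq.1 ?_
    rw [hβ, Cardinal.mk_set, hA, hGCH]
  have H : ∀ b : β, ∃ f : A → Bool,
      ∀ x : {x : β // x < b ∧ κ ≤ #(e x)}, ∃ u ∈ e x.1, ∃ v ∈ e x.1, f u ≠ f v := by
    intro b
    have hcard : #{x : β // x < b ∧ κ ≤ #(e x)} ≤ κ := by
      have h1 : #{x : β // x < b ∧ κ ≤ #(e x)} ≤ #(Set.Iio b) :=
        Cardinal.mk_subtype_le_of_subset (fun x h => h.1)
      have h2 : #(Set.Iio b) < Order.succ κ := Cardinal.mk_Iio_ord_toType b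
      exact h1.trans (Order.lt_succ_iff.1 h2)
    have hκord : #(κ.ord.ToType) = κ := by rw [Cardinal.mk_toType, Cardinal.card_ord]
    obtain ⟨ι⟩ := (Cardinal.le_def _ _).1 (hcard.trans hκord.ge)
    exact exists_nonconstant hκ ι ι.injective (fun x => e x.1) (fun x => x.2.2)
  choose f hf using H
  refine ⟨fun a b => f (ψ b) a, ?_⟩
  intro A' hA' B' hB'
  set b₁ := e.symm A' with hb₁
  have heb₁ : e b₁ = A' := e.apply_symm_apply A'
  have hex : ∃ b ∈ B', b₁ < ψ b := by
    by_contra hcon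
    push_neg at hcon
    have hinj : #B' ≤ #(Set.Iic b₁) := by
      refine mk_le_of_injective (f := fun b => (⟨ψ b.1, hcon b.1 b.2⟩ : Set.Iic b₁)) ?_
      intro x y h
      simp only [Subtype.mk.injEq] at h
      exact Subtype.ext (ψ.injective (congrArg Subtype.val h))
    have hIic : #(Set.Iic b₁) ≤ κ := by
      have h1 : (Set.Iic b₁ : Set β) = Set.Iio b₁ ∪ {b₁} := (Set.Iio_union_right).symm
      rw [h1]
      refine (Cardinal.mk_union_le _ _).trans ?_
      have h2 : #(Set.Iio b₁) ≤ κ := Order.lt_succ_iff.1 (Cardinal.mk_Iio_ord_toType b₁)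
      rw [Cardinal.mk_singleton]
      calc #(Set.Iio b₁) + 1 ≤ κ + 1 := add_le_add h2 le_rfl
        _ = κ := Cardinal.add_one_eq hκ
    exact absurd (hB'.trans (hinj.trans hIic)) (not_le.2 (Order.lt_succ κ))
  obtain ⟨b, hbB', hlt⟩ := hex
  have hx : κ ≤ #(e b₁) := by rw [heb₁]; exact hA'
  obtain ⟨u, hu, v, hv, huv⟩ := hf (ψ b) ⟨b₁, hlt, hx⟩
  rw [heb₁] at hu hv
  exact ⟨b, hbB', u, hu, v, hv, huv⟩

/-- The symmetric extension of a colouring of `A × B` to unordered pairs in `A ⊕ B`. -/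
def pairColour {A B : Type u} (c : A → B → Bool) : Sym2 (A ⊕ B) → Bool :=
  Sym2.lift ⟨fun x y => match x, y with
    | Sum.inl a, Sum.inr b => c a b
    | Sum.inr b, Sum.inl a => c a b
    | _, _ => false,
   by intro x y; cases x <;> cases y <;> rfl⟩

lemma pairColour_mk {A B : Type u} (c : A → B → Bool) (a : A) (b : B) :
    pairColour c s(Sum.inl a, Sum.inr b) = c a b := rfl

/-- Let `κ` be an infinite cardinal with `2 ^ κ = κ⁺` (an
instance of GCH).  Then there is a `2`-colouring of the edge set of the
complete bipartite graph `K_{κ,κ⁺}` such that no colour class contains a copy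
of `K_{κ,κ⁺}`. -/
theorem exists_colouring_no_monochromatic_completeBipartite
    (κ : Cardinal.{u}) (hκ : ℵ₀ ≤ κ) (hGCH : 2 ^ κ = Order.succ κ)
    (A B : Type u) (hA : #A = κ) (hB : #B = Order.succ κ) :
    ∃ c : (completeBipartiteGraph A B).edgeSet → Bool,
      ∀ i : Bool,
        ¬ ContainsCopy (colourClass (completeBipartiteGraph A B) c i)
          (completeBipartiteGraph A B) := by
  classical
  obtain ⟨c, hc⟩ := exists_good_colouring κ hκ hGCH A B hA hB
  refine ⟨fun e => pairColour c e.1, ?_⟩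
  rintro i ⟨F, hFinj⟩
  have hsub : ∀ x y : A ⊕ B,
      (colourClass (completeBipartiteGraph A B) (fun e => pairColour c e.1) i).Adj x y →
        (completeBipartiteGraph A B).Adj x y := by
    intro x y h
    rw [colourClass, SimpleGraph.fromEdgeSet_adj] at h
    obtain ⟨⟨hm, _⟩, _⟩ := h
    exact ((completeBipartiteGraph A B).mem_edgeSet).mp hm
  have hGadjAB : ∀ (a : A) (b : B),
      (completeBipartiteGraph A B).Adj (Sum.inl a) (Sum.inr b) := by
    intro a b; simp
  have hadjc : ∀ (a : A) (b : B),
      (colourClass (completeBipartiteGraph A B) (fun e => pairColour c e.1) i).Adj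
        (F (Sum.inl a)) (F (Sum.inr b)) :=
    fun a b => F.map_adj (hGadjAB a b)
  have hGadj : ∀ (a : A) (b : B),
      (completeBipartiteGraph A B).Adj (F (Sum.inl a)) (F (Sum.inr b)) :=
    fun a b => hsub _ _ (hadjc a b)
  have hA0 : Nonempty A := by
    rw [← Cardinal.mk_ne_zero_iff, hA]; exact (aleph0_pos.trans_le hκ).ne'
  have hB0 : Nonempty B := by
    rw [← Cardinal.mk_ne_zero_iff, hB]
    exact (aleph0_pos.trans_le (hκ.trans (Order.le_succ κ))).ne'
  obtain ⟨a₀⟩ := hA0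
  obtain ⟨b₀⟩ := hB0
  cases hFb0 : F (Sum.inr b₀) with
  | inl x =>
    have h1 : ∀ a : A, ∃ b' : B, F (Sum.inl a) = Sum.inr b' := by
      intro a
      have h := hGadj a b₀
      rw [hFb0] at h
      rw [← Sum.isRight_iff]
      rcases h with ⟨_, h2⟩ | ⟨h2, _⟩
      · simp at h2
      · exact h2
    choose g hg using h1
    have h2 : ∀ b : B, ∃ a' : A, F (Sum.inr b) = Sum.inl a' := by
      intro b
      have h := hGadj a₀ b
      rw [hg a₀] at h
      rw [← Sum.isLeft_iff]
      rcases h with ⟨h2, _⟩ | ⟨_, h2⟩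
      · simp at h2
      · exact h2
    choose h hh using h2
    have hhinj : Function.Injective h := by
      intro b b' heq
      have : F (Sum.inr b) = F (Sum.inr b') := by rw [hh, hh, heq]
      exact Sum.inr_injective (hFinj this)
    have hle : #B ≤ #A := mk_le_of_injective hhinj
    rw [hA, hB] at hle
    exact absurd hle (not_le.2 (Order.lt_succ κ))
  | inr x =>
    have h1 : ∀ a : A, ∃ a' : A, F (Sum.inl a) = Sum.inl a' := by
      intro a
      have h := hGadj a b₀
      rw [hFb0] at h
      rw [← Sum.isLeft_iff]
      rcases h with ⟨h2, _⟩ | ⟨_, h2⟩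
      · exact h2
      · simp at h2
    choose g hg using h1
    have h2 : ∀ b : B, ∃ b' : B, F (Sum.inr b) = Sum.inr b' := by
      intro b
      have h := hGadj a₀ b
      rw [hg a₀] at h
      rw [← Sum.isRight_iff]
      rcases h with ⟨_, h2⟩ | ⟨h2, _⟩
      · exact h2
      · simp at h2
    choose h hh using h2
    have hginj : Function.Injective g := by
      intro a a' heq
      have : F (Sum.inl a) = F (Sum.inl a') := by rw [hg, hg, heq]
      exact Sum.inl_injective (hFinj this)
    have hhinj : Function.Injective h := by
      intro b b' heq
      have : F (Sum.inr b) = F (Sum.inr b') := by rw [hh, hh, heq]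
      exact Sum.inr_injective (hFinj this)
    have hcol : ∀ (a : A) (b : B), c (g a) (h b) = i := by
      intro a b
      have hadj := hadjc a b
      rw [hg, hh, colourClass, SimpleGraph.fromEdgeSet_adj] at hadj
      obtain ⟨⟨hm, hcv⟩, _⟩ := hadj
      rwa [pairColour_mk] at hcv
    have hA' : κ ≤ #(Set.range g) := ((Cardinal.mk_range_eq g hginj).trans hA).ge
    have hB' : Order.succ κ ≤ #(Set.range h) := ((Cardinal.mk_range_eq h hhinj).trans hB).ge
    obtain ⟨b, hbB, a₁, ha₁, a₂, ha₂, hne⟩ := hc _ hA' _ hB'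
    obtain ⟨u, rfl⟩ := ha₁
    obtain ⟨v, rfl⟩ := ha₂
    obtain ⟨w, rfl⟩ := hbB
    exact hne ((hcol u w).trans (hcol v w).symm)
end

section
/- Let κ be an infinite cardinal and assume 2^κ = κ⁺ (an instance of GCH). Then Breaker has a winning strategy in the Maker-Breaker game MB(K_{κ⁺}, K_{κ⁺}). -/
open Cardinal

universe u v

section MBAux

open Ordinal Function Set

theorem MBAux.mod_two_succ {γ : Ordinal.{u}} (h : γ % 2 = 0) : (γ + 1) % 2 = 1 := by
  have h2 : (2 : Ordinal) * (γ / 2) + γ % 2 = γ := Ordinal.div_add_mod γ 2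
  rw [h, add_zero] at h2
  have h3 : γ + 1 = 2 * (γ / 2) + 1 := by rw [h2]
  rw [h3, Ordinal.mul_add_mod_self]
  exact Ordinal.mod_eq_of_lt one_lt_two

open Classical in
noncomputable def MBAux.pairStrat {α : Type u} [Nonempty α] (B : Set α) (π : α → α) :
    MBStrategy α := fun γ hist =>
  if h : ∃ e, e ∈ B ∧ (∀ β hβ, hist β hβ ≠ e) ∧
      ∃ δ, ∃ hδ : δ < γ, δ + 1 = γ ∧ π (hist δ hδ) = e
  then h.choose
  else if h2 : ∃ e, e ∈ B ∧ ∀ β hβ, hist β hβ ≠ e then h2.choose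
  else Classical.arbitrary α

theorem MBAux.breaker_pairing {α : Type u} [Nonempty α] (B : Set α) (π : α → α) :
    ∃ σ : MBStrategy α, σ.IsLegal B breakerTurn ∧
      ∀ p : MBPlay B, p.Follows breakerTurn σ →
        ∀ (γ₁ : Ordinal.{u}) (h₁ : γ₁ < p.len) (γ₂ : Ordinal.{u}) (h₂ : γ₂ < p.len),
          makerTurn γ₁ → makerTurn γ₂ →
          π (p.move γ₁ h₁) = p.move γ₂ h₂ → π (p.move γ₂ h₂) = p.move γ₁ h₁ →
          p.move γ₁ h₁ ≠ p.move γ₂ h₂ → False := by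
  classical
  refine ⟨MBAux.pairStrat B π, ?_, ?_⟩
  · intro γ hist _ _ _ hex
    unfold MBAux.pairStrat
    by_cases h : ∃ e, e ∈ B ∧ (∀ β hβ, hist β hβ ≠ e) ∧
        ∃ δ, ∃ hδ : δ < γ, δ + 1 = γ ∧ π (hist δ hδ) = e
    · rw [dif_pos h]
      exact ⟨h.choose_spec.1, h.choose_spec.2.1⟩
    · rw [dif_neg h]
      have h2 : ∃ e, e ∈ B ∧ ∀ β hβ, hist β hβ ≠ e := by
        obtain ⟨e, he, hfr⟩ := hex; exact ⟨e, he, hfr⟩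
      rw [dif_pos h2]
      exact ⟨h2.choose_spec.1, h2.choose_spec.2⟩
  · intro p hp γ₁ h₁ γ₂ h₂ hm₁ hm₂ hπ₁ hπ₂ hne
    have key : ∀ (γ₁ : Ordinal.{u}) (h₁ : γ₁ < p.len) (γ₂ : Ordinal.{u}) (h₂ : γ₂ < p.len),
        γ₁ < γ₂ → makerTurn γ₁ → makerTurn γ₂ →
        π (p.move γ₁ h₁) = p.move γ₂ h₂ → p.move γ₁ h₁ ≠ p.move γ₂ h₂ → False := by
      clear hπ₁ hπ₂ hne hm₁ hm₂ h₁ h₂ γ₁ γ₂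
      intro γ₁ h₁ γ₂ h₂ hlt hm₁ hm₂ hπ₁ hne
      have h12 : γ₁ + 1 ≤ γ₂ := by
        rw [Ordinal.add_one_eq_succ]; exact Order.succ_le_of_lt hlt
      have hlen : γ₁ + 1 < p.len := lt_of_le_of_lt h12 h₂
      have hbt : breakerTurn (γ₁ + 1) := MBAux.mod_two_succ hm₁
      have hfol := hp (γ₁ + 1) hlen hbt
      have hγlt : γ₁ < γ₁ + 1 := by
        rw [Ordinal.add_one_eq_succ]; exact Order.lt_succ γ₁
      have hc : ∃ e, e ∈ B ∧ (∀ (β : Ordinal.{u}) (hβ : β < γ₁ + 1), p.move β (hβ.trans hlen) ≠ e) ∧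
          ∃ δ, ∃ hδ : δ < γ₁ + 1, δ + 1 = γ₁ + 1 ∧ π (p.move δ (hδ.trans hlen)) = e := by
        refine ⟨p.move γ₂ h₂, p.move_mem γ₂ h₂, ?_, γ₁, hγlt, rfl, hπ₁⟩
        intro β hβ heq
        have hβ2 : β = γ₂ := p.move_inj _ _ _ _ heq
        subst hβ2
        exact absurd (lt_of_lt_of_le hβ h12) (lt_irrefl β)
      have hmv : p.move (γ₁ + 1) hlen = hc.choose := by
        rw [hfol]; unfold MBAux.pairStrat; rw [dif_pos hc]
      obtain ⟨hmem, hfresh, δ, hδ, hδeq, hπδ⟩ := hc.choose_spec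
      have hδγ : δ = γ₁ := by
        rw [Ordinal.add_one_eq_succ, Ordinal.add_one_eq_succ] at hδeq
        exact Order.succ_injective hδeq
      have hmeq : p.move δ (hδ.trans hlen) = p.move γ₁ h₁ := by subst hδγ; rfl
      have hch : hc.choose = p.move γ₂ h₂ := by rw [← hπδ, hmeq]; exact hπ₁
      have hfin : γ₁ + 1 = γ₂ := p.move_inj _ _ _ _ (by rw [hmv, hch])
      have hpar : (γ₁ + 1) % 2 = 1 := MBAux.mod_two_succ hm₁
      rw [hfin] at hpar
      rw [hm₂] at hpar
      exact zero_ne_one hpar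
    rcases lt_trichotomy γ₁ γ₂ with h | h | h
    · exact key γ₁ h₁ γ₂ h₂ h hm₁ hm₂ hπ₁ hne
    · subst h; exact hne rfl
    · exact key γ₂ h₂ γ₁ h₁ h hm₂ hm₁ hπ₂ (Ne.symm hne)

theorem MBAux.seg_small (κ : Cardinal.{u}) (i : κ.ord.ToType) : #{y // y < i} < κ := by
  haveI : IsWellOrder κ.ord.ToType (· < ·) := isWellOrder_lt
  have h := typein_lt_self i
  have h2 := Cardinal.lt_ord.mp h
  change #{y // y < i} < κ at h2; exact h2
theorem MBAux.greedy_pairs {V : Type u} (κ : Cardinal.{u}) (hκ : ℵ₀ ≤ κ)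
    (T : κ.ord.ToType → Set V) :
    ∃ g : κ.ord.ToType → Option (V × V),
      (∀ w q, g w = some q → q.1 ≠ q.2 ∧ q.1 ∈ T w ∧ q.2 ∈ T w) ∧
      (∀ w w', w' < w → ∀ q q', g w = some q → g w' = some q' →
        q.1 ≠ q'.1 ∧ q.1 ≠ q'.2 ∧ q.2 ≠ q'.1 ∧ q.2 ≠ q'.2) ∧
      (∀ w, #(T w) = κ → ∃ q, g w = some q) := by
  classical
  have wf : WellFounded ((· < ·) : κ.ord.ToType → κ.ord.ToType → Prop) :=
    wellFounded_lt
  set F : ∀ w : κ.ord.ToType, (∀ w', w' < w → Option (V × V)) → Option (V × V) :=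
    fun w ih =>
      if h : ∃ p : V × V, p.1 ≠ p.2 ∧ p.1 ∈ T w ∧ p.2 ∈ T w ∧
          ∀ w' (hw' : w' < w) q, ih w' hw' = some q →
            p.1 ≠ q.1 ∧ p.1 ≠ q.2 ∧ p.2 ≠ q.1 ∧ p.2 ≠ q.2
      then some h.choose else none with hF
  set g : κ.ord.ToType → Option (V × V) := wf.fix F with hg
  have gdef : ∀ w, g w = F w (fun w' _ => g w') := fun w => wf.fix_eq F w
  have gsome : ∀ w q, g w = some q →
      q.1 ≠ q.2 ∧ q.1 ∈ T w ∧ q.2 ∈ T w ∧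
      ∀ w' (hw' : w' < w) q', g w' = some q' →
        q.1 ≠ q'.1 ∧ q.1 ≠ q'.2 ∧ q.2 ≠ q'.1 ∧ q.2 ≠ q'.2 := by
    intro w q hq
    rw [gdef w, hF] at hq
    dsimp only at hq
    split at hq
    · rename_i hcond
      obtain ⟨h1, h2, h3, h4⟩ := hcond.choose_spec
      cases Option.some.inj hq
      exact ⟨h1, h2, h3, h4⟩
    · cases hq
  refine ⟨g, fun w q hq => ⟨(gsome w q hq).1, (gsome w q hq).2.1, (gsome w q hq).2.2.1⟩,
    fun w w' hlt q q' hq hq' => (gsome w q hq).2.2.2 w' hlt q' hq', ?_⟩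
  intro w hTw
  rw [gdef w, hF]
  dsimp only
  have hcond : ∃ p : V × V, p.1 ≠ p.2 ∧ p.1 ∈ T w ∧ p.2 ∈ T w ∧
      ∀ w' (hw' : w' < w) q, (fun w' (_ : w' < w) => g w') w' hw' = some q →
        p.1 ≠ q.1 ∧ p.1 ≠ q.2 ∧ p.2 ≠ q.1 ∧ p.2 ≠ q.2 := by
    set U : Set V := {a | ∃ w', ∃ _ : w' < w, ∃ q, g w' = some q ∧ (a = q.1 ∨ a = q.2)}
      with hU
    have hUcard : #U < κ := by
      rcases Set.eq_empty_or_nonempty U with hUe | hUne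
      · rw [hUe]
        simpa using lt_of_lt_of_le aleph0_pos hκ
      · obtain ⟨v₀, _⟩ := hUne
        set G : {w' // w' < w} × Bool → V := fun x =>
          if h : ∃ q, g x.1.val = some q then (if x.2 then h.choose.1 else h.choose.2)
          else v₀ with hG
        have hsub : U ⊆ Set.range G := by
          rintro a ⟨w', hw', q, hq, hcase⟩
          have hex : ∃ q', g w' = some q' := ⟨q, hq⟩
          have hch : hex.choose = q := Option.some.inj (hex.choose_spec.symm.trans hq)
          rcases hcase with h | h
          · refine ⟨(⟨w', hw'⟩, true), ?_⟩
            rw [hG]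
            dsimp only
            rw [dif_pos hex, if_pos rfl, hch, ← h]
          · refine ⟨(⟨w', hw'⟩, false), ?_⟩
            rw [hG]
            dsimp only
            rw [dif_pos hex, if_neg (by simp), hch, ← h]
        have h2κ : (2 : Cardinal) < κ := by
          refine lt_of_lt_of_le ?_ hκ
          exact_mod_cast Cardinal.nat_lt_aleph0 2
        calc #U ≤ #(Set.range G) := Cardinal.mk_le_mk_of_subset hsub
          _ ≤ #({w' // w' < w} × Bool) := Cardinal.mk_range_le
          _ = #{w' // w' < w} * 2 := by rw [Cardinal.mk_prod]; simp
          _ < κ := Cardinal.mul_lt_of_lt hκ (MBAux.seg_small κ w) h2κ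
    have hdiff : κ ≤ #(T w \ U : Set V) := by
      by_contra hlt
      push_neg at hlt
      have hsub : T w ⊆ (T w \ U) ∪ U := by
        intro x hx
        by_cases hxu : x ∈ U
        · exact Or.inr hxu
        · exact Or.inl ⟨hx, hxu⟩
      have : #(T w) ≤ #(T w \ U : Set V) + #U :=
        le_trans (Cardinal.mk_le_mk_of_subset hsub) (Cardinal.mk_union_le _ _)
      rw [hTw] at this
      exact absurd this (not_le.mpr (Cardinal.add_lt_of_lt hκ hlt hUcard))
    have hnt : (1 : Cardinal) < #(T w \ U : Set V) :=
      lt_of_lt_of_le Cardinal.one_lt_aleph0 (le_trans hκ hdiff)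
    rw [Cardinal.one_lt_iff_nontrivial] at hnt
    obtain ⟨x, y, hxy⟩ := hnt.exists_pair_ne
    refine ⟨(x.val, y.val), fun h => hxy (Subtype.ext h), x.2.1, y.2.1, ?_⟩
    intro w' hw' q hq
    dsimp only at hq
    have hx : x.val ∉ U := x.2.2
    have hy : y.val ∉ U := y.2.2
    exact ⟨fun h => hx ⟨w', hw', q, hq, Or.inl h⟩,
      fun h => hx ⟨w', hw', q, hq, Or.inr h⟩,
      fun h => hy ⟨w', hw', q, hq, Or.inl h⟩,
      fun h => hy ⟨w', hw', q, hq, Or.inr h⟩⟩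
  rw [dif_pos hcond]
  exact ⟨_, rfl⟩

theorem MBAux.exists_surj_of_mk_le {X Y : Type u} [Nonempty X] (h : #X ≤ #Y) :
    ∃ f : Y → X, Function.Surjective f := by
  rw [Cardinal.le_def] at h
  obtain ⟨e⟩ := h
  exact ⟨Function.invFun e, Function.invFun_surjective e.injective⟩

theorem MBAux.exists_involution {V : Type u} (κ : Cardinal.{u}) (hκ : ℵ₀ ≤ κ)
    (r : V → V → Prop) [IsWellOrder V r] (S : V → Set V)
    (hseg : ∀ x : V, #{y // r y x} ≤ κ) (b : V) :
    ∃ ι : V → V, (∀ a, ι (ι a) = a) ∧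
      ∀ A : Set V, #A = κ → (∀ x ∈ A, r x b) → (∃ i, r i b ∧ S i = A) →
        ∃ a, a ∈ A ∧ ι a ∈ A ∧ ι a ≠ a := by
  classical
  set 𝒜 : Set (Set V) := {A | #A = κ ∧ (∀ x ∈ A, r x b) ∧ ∃ i, r i b ∧ S i = A} with h𝒜
  by_cases hne : 𝒜.Nonempty
  case neg =>
    exact ⟨id, fun a => rfl, fun A h1 h2 h3 => absurd ⟨A, h1, h2, h3⟩ hne⟩
  case pos =>
  have hcard : #↥𝒜 ≤ #(κ.ord.ToType) := by
    rw [Cardinal.mk_ord_toType]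
    have hinj : ∃ F : ↥𝒜 → {y // r y b}, Function.Injective F := by
      refine ⟨fun A => ⟨A.2.2.2.choose, A.2.2.2.choose_spec.1⟩, ?_⟩
      intro A A' h
      have h1 : S (A.2.2.2.choose) = A.val := A.2.2.2.choose_spec.2
      have h2 : S (A'.2.2.2.choose) = A'.val := A'.2.2.2.choose_spec.2
      have h3 : A.2.2.2.choose = A'.2.2.2.choose := congrArg Subtype.val h
      apply Subtype.ext
      rw [← h1, ← h2, h3]
    obtain ⟨F, hF⟩ := hinj
    exact (Cardinal.mk_le_of_injective hF).trans (hseg b)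
  haveI : Nonempty ↥𝒜 := hne.to_subtype
  obtain ⟨f, hf⟩ := MBAux.exists_surj_of_mk_le hcard
  set T : κ.ord.ToType → Set V := fun w => (f w).val with hT
  obtain ⟨g, hg1, hg2, hg3⟩ := MBAux.greedy_pairs κ hκ T
  have huniq : ∀ (a : V) w q w' q', g w = some q → g w' = some q' →
      (a = q.1 ∨ a = q.2) → (a = q'.1 ∨ a = q'.2) → w = w' ∧ q = q' := by
    intro a w q w' q' hw hw' ha ha'
    rcases lt_trichotomy w w' with h | h | h
    · exfalso
      obtain ⟨d1, d2, d3, d4⟩ := hg2 w' w h q' q hw' hw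
      rcases ha' with h' | h' <;> rcases ha with h'' | h''
      · exact d1 (h'.symm.trans h'')
      · exact d2 (h'.symm.trans h'')
      · exact d3 (h'.symm.trans h'')
      · exact d4 (h'.symm.trans h'')
    · subst h
      rw [hw] at hw'
      exact ⟨rfl, Option.some.inj hw'⟩
    · exfalso
      obtain ⟨d1, d2, d3, d4⟩ := hg2 w w' h q q' hw hw'
      rcases ha with h' | h' <;> rcases ha' with h'' | h''
      · exact d1 (h'.symm.trans h'')
      · exact d2 (h'.symm.trans h'')
      · exact d3 (h'.symm.trans h'')
      · exact d4 (h'.symm.trans h'')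
  set P : V → Prop := fun a => ∃ w q, g w = some q ∧ (a = q.1 ∨ a = q.2) with hP
  set ι : V → V := fun a => if h : P a then
      (if a = h.choose_spec.choose.1 then h.choose_spec.choose.2 else h.choose_spec.choose.1)
    else a with hι
  have ιfix : ∀ a, ¬ P a → ι a = a := by
    intro a h
    rw [hι]
    dsimp only
    rw [dif_neg h]
  have ιspec : ∀ a, P a → ∃ w q, g w = some q ∧
      ((a = q.1 ∧ ι a = q.2) ∨ (a = q.2 ∧ ι a = q.1)) := by
    intro a ha
    refine ⟨ha.choose, ha.choose_spec.choose, ha.choose_spec.choose_spec.1, ?_⟩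
    by_cases h1 : a = ha.choose_spec.choose.1
    · left
      refine ⟨h1, ?_⟩
      rw [hι]
      dsimp only
      rw [dif_pos ha, if_pos h1]
    · right
      refine ⟨?_, ?_⟩
      · rcases ha.choose_spec.choose_spec.2 with h | h
        · exact absurd h h1
        · exact h
      · rw [hι]
        dsimp only
        rw [dif_pos ha, if_neg h1]
  have hPι : ∀ a, P a → P (ι a) := by
    intro a ha
    obtain ⟨w, q, hw, hcase⟩ := ιspec a ha
    rcases hcase with ⟨h1, h2⟩ | ⟨h1, h2⟩
    · exact ⟨w, q, hw, Or.inr h2⟩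
    · exact ⟨w, q, hw, Or.inl h2⟩
  have hinv : ∀ a, ι (ι a) = a := by
    intro a
    by_cases ha : P a
    · obtain ⟨w, q, hw, hcase⟩ := ιspec a ha
      have hq := hg1 w q hw
      obtain ⟨w', q', hw', hcase'⟩ := ιspec (ι a) (hPι a ha)
      rcases hcase with ⟨h1, h2⟩ | ⟨h1, h2⟩
      · obtain ⟨hww, hqq⟩ := huniq (ι a) w' q' w q hw' hw
          (by rcases hcase' with ⟨h, _⟩ | ⟨h, _⟩; exact Or.inl h; exact Or.inr h)
          (Or.inr h2)
        subst hww; subst hqq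
        rcases hcase' with ⟨h3, h4⟩ | ⟨h3, h4⟩
        · exact absurd (h2.symm.trans h3) hq.1.symm.elim
        · rw [h4, ← h1]
      · obtain ⟨hww, hqq⟩ := huniq (ι a) w' q' w q hw' hw
          (by rcases hcase' with ⟨h, _⟩ | ⟨h, _⟩; exact Or.inl h; exact Or.inr h)
          (Or.inl h2)
        subst hww; subst hqq
        rcases hcase' with ⟨h3, h4⟩ | ⟨h3, h4⟩
        · rw [h4, ← h1]
        · exact absurd (h3.symm.trans h2).symm hq.1
    · rw [ιfix a ha, ιfix a ha]
  refine ⟨ι, hinv, ?_⟩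
  intro A h1 h2 h3
  have hA : A ∈ 𝒜 := ⟨h1, h2, h3⟩
  obtain ⟨w, hw⟩ := hf ⟨A, hA⟩
  have hTw : T w = A := congrArg Subtype.val hw
  obtain ⟨q, hq⟩ := hg3 w (by rw [hTw]; exact h1)
  have hq1 := hg1 w q hq
  have hP1 : P q.1 := ⟨w, q, hq, Or.inl rfl⟩
  obtain ⟨w', q', hw', hcase⟩ := ιspec q.1 hP1
  obtain ⟨hww, hqq⟩ := huniq q.1 w' q' w q hw' hq
    (by rcases hcase with ⟨h, _⟩ | ⟨h, _⟩; exact Or.inl h; exact Or.inr h)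
    (Or.inl rfl)
  rw [hqq] at hcase
  have hι1 : ι q.1 = q.2 := by
    rcases hcase with ⟨h4, h5⟩ | ⟨h4, h5⟩
    · exact h5
    · exact absurd h4 hq1.1
  refine ⟨q.1, ?_, ?_, ?_⟩
  · rw [← hTw]; exact hq1.2.1
  · rw [hι1, ← hTw]; exact hq1.2.2
  · rw [hι1]; exact fun h => hq1.1 h.symm
end MBAux

/-- Let `κ` be an infinite cardinal with `2 ^ κ = κ⁺` (an
instance of GCH).  Then Breaker has a winning strategy in the Maker–Breaker
game `MB(K_{κ⁺}, K_{κ⁺})`. -/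

theorem breakerWins_complete_succ_self
    (κ : Cardinal.{u}) (hκ : ℵ₀ ≤ κ) (hGCH : 2 ^ κ = Order.succ κ)
    (V : Type u) (hV : #V = Order.succ κ) :
    BreakerWins (⊤ : SimpleGraph V) (⊤ : SimpleGraph V) := by
  classical
  have hVne : Nonempty V := Cardinal.mk_ne_zero_iff.mp
    (by rw [hV]; exact (lt_of_le_of_lt (show (0 : Cardinal) ≤ κ from zero_le) (Order.lt_succ κ)).ne')
  haveI := hVne
  haveI : Nonempty (Sym2 V) := ⟨s(Classical.arbitrary V, Classical.arbitrary V)⟩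
  obtain ⟨r, wo, hr⟩ := Cardinal.ord_eq V
  haveI := wo
  have hseg : ∀ x : V, #{y // r y x} ≤ κ := by
    intro x
    have h1 := Ordinal.typein_lt_type r x
    rw [← hr, hV] at h1
    have h2 := Cardinal.lt_ord.mp h1
    change #{ y // r y x } < _ at h2
    exact Order.lt_succ_iff.mp h2
  have hWcard : #(κ.ord.ToType) = κ := by rw [Cardinal.mk_ord_toType]
  have hpow : #V ^ κ ≤ #V := by
    rw [hV, ← hGCH, ← Cardinal.power_mul, Cardinal.mul_eq_self hκ]
  have h𝒜card : #{A : Set V // #A = κ} ≤ #V := by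
    have he : ∀ A : {A : Set V // #A = κ}, Nonempty (κ.ord.ToType ≃ A.val) := by
      intro A
      rw [← Cardinal.eq, hWcard, A.2]
    have hF : Function.Injective (fun A : {A : Set V // #A = κ} =>
        (fun w => ((he A).some w).val : κ.ord.ToType → V)) := by
      intro A A' h
      have hr1 : ∀ B : {A : Set V // #A = κ},
          Set.range (fun w => ((he B).some w).val) = B.val := by
        intro B
        ext x
        constructor
        · rintro ⟨w, rfl⟩; exact ((he B).some w).2
        · intro hx; exact ⟨(he B).some.symm ⟨x, hx⟩, by simp⟩
      apply Subtype.ext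
      rw [← hr1 A, ← hr1 A']
      exact congrArg Set.range h
    calc #{A : Set V // #A = κ} ≤ #(κ.ord.ToType → V) := Cardinal.mk_le_of_injective hF
      _ = #V ^ κ := by rw [← Cardinal.power_def, hWcard]
      _ ≤ #V := hpow
  haveI h𝒜ne : Nonempty {A : Set V // #A = κ} := by
    obtain ⟨p, hp⟩ := Cardinal.le_mk_iff_exists_set.mp
      (show κ ≤ #V by rw [hV]; exact (Order.lt_succ κ).le)
    exact ⟨⟨p, hp⟩⟩
  obtain ⟨sur, hsur⟩ := MBAux.exists_surj_of_mk_le h𝒜card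
  set S : V → Set V := fun i => (sur i).val with hSdef
  obtain ⟨ι, hinv, hmeet⟩ : ∃ ι : V → V → V, (∀ b a, ι b (ι b a) = a) ∧
      ∀ b (A : Set V), #A = κ → (∀ x ∈ A, r x b) → (∃ i, r i b ∧ S i = A) →
        ∃ a, a ∈ A ∧ ι b a ∈ A ∧ ι b a ≠ a := by
    choose ι h using fun b => MBAux.exists_involution κ hκ r S hseg b
    exact ⟨ι, fun b => (h b).1, fun b => (h b).2⟩
  have hasymm : ∀ {x y : V}, r x y → ¬ r y x := fun h => asymm h
  set π : Sym2 V → Sym2 V := fun e =>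
    if h : ∃ x : V × V, r x.1 x.2 ∧ ι x.2 x.1 ≠ x.1 ∧ e = s(x.1, x.2)
    then s(ι h.choose.2 h.choose.1, h.choose.2) else e with hπdef
  have hπcomp : ∀ a c : V, r a c → ι c a ≠ a → π s(a, c) = s(ι c a, c) := by
    intro a c h1 h2
    have hex : ∃ x : V × V, r x.1 x.2 ∧ ι x.2 x.1 ≠ x.1 ∧ s(a, c) = s(x.1, x.2) :=
      ⟨(a, c), h1, h2, rfl⟩
    rw [hπdef]
    dsimp only
    rw [dif_pos hex]
    obtain ⟨hx1, hx2, hx3⟩ := hex.choose_spec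
    rw [Sym2.eq_iff] at hx3
    rcases hx3 with ⟨h3, h4⟩ | ⟨h3, h4⟩
    · rw [← h3, ← h4]
    · exfalso
      rw [← h4, ← h3] at hx1
      exact hasymm h1 hx1
  obtain ⟨σ, hleg, hdeath⟩ := MBAux.breaker_pairing (⊤ : SimpleGraph V).edgeSet π
  refine ⟨σ, hleg, ?_⟩
  intro p hp hcopy
  obtain ⟨F, hFinj⟩ := hcopy
  set A : Set V := Set.range F with hAdef
  have hAcard : #A = Order.succ κ := by
    rw [hAdef, Cardinal.mk_range_eq _ hFinj, hV]
  have hclaim : ∀ x y : V, x ∈ A → y ∈ A → x ≠ y → s(x, y) ∈ p.claimed makerTurn := by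
    intro x y hx hy hxy
    obtain ⟨u, hu⟩ := hx
    obtain ⟨v, hv⟩ := hy
    have huv : u ≠ v := fun h => hxy (by rw [← hu, ← hv, h])
    have hadj := F.map_adj ((SimpleGraph.top_adj u v).mpr huv)
    rw [SimpleGraph.fromEdgeSet_adj] at hadj
    rw [← hu, ← hv]
    exact hadj.1
  have hκA : κ ≤ #A := by rw [hAcard]; exact (Order.lt_succ κ).le
  obtain ⟨S₀, hS₀A, hS₀⟩ := Cardinal.le_mk_iff_exists_subset.mp hκA
  obtain ⟨i, hi⟩ := hsur ⟨S₀, hS₀⟩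
  have hSi : S i = S₀ := congrArg Subtype.val hi
  set T' : Set V := insert i S₀ with hT'def
  have hT'card : #T' ≤ κ := by
    calc #T' ≤ #S₀ + 1 := Cardinal.mk_insert_le
      _ = κ + 1 := by rw [hS₀]
      _ = κ := Cardinal.add_one_eq hκ
  have hbound : ∃ c : V, ∀ t ∈ T', r t c := by
    by_contra hc
    push_neg at hc
    haveI : Nonempty ↥T' := ⟨⟨i, Set.mem_insert i S₀⟩⟩
    have hsub : (Set.univ : Set V) ⊆ ⋃ t : ↥T', {y | y = t.val ∨ r y t.val} := by
      intro c _
      obtain ⟨t, ht, hrc⟩ := hc c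
      rcases trichotomous_of r t c with h | h | h
      · exact absurd h hrc
      · exact Set.mem_iUnion.mpr ⟨⟨t, ht⟩, Or.inl h.symm⟩
      · exact Set.mem_iUnion.mpr ⟨⟨t, ht⟩, Or.inr h⟩
    have hIic : ∀ t : V, #({y | y = t ∨ r y t} : Set V) ≤ κ := by
      intro t
      have hsub2 : {y | y = t ∨ r y t} ⊆ insert t {y | r y t} := by
        intro y hy
        rcases hy with h | h
        · exact Or.inl h
        · exact Or.inr h
      calc #({y | y = t ∨ r y t} : Set V) ≤ #(insert t {y | r y t} : Set V) :=
            Cardinal.mk_le_mk_of_subset hsub2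
        _ ≤ #({y | r y t} : Set V) + 1 := Cardinal.mk_insert_le
        _ ≤ κ + 1 := add_le_add_left (hseg t) 1
        _ = κ := Cardinal.add_one_eq hκ
    have hbig : #V ≤ κ * κ := by
      calc #V = #(Set.univ : Set V) := Cardinal.mk_univ.symm
        _ ≤ #(⋃ t : ↥T', {y | y = t.val ∨ r y t.val}) := Cardinal.mk_le_mk_of_subset hsub
        _ ≤ #↥T' * ⨆ t : ↥T', #({y | y = t.val ∨ r y t.val} : Set V) :=
            Cardinal.mk_iUnion_le _
        _ ≤ κ * κ := mul_le_mul' hT'card (ciSup_le' (fun t => hIic t.val))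
    rw [Cardinal.mul_eq_self hκ, hV] at hbig
    exact absurd hbig (not_le.mpr (Order.lt_succ κ))
  obtain ⟨c, hcb⟩ := hbound
  have hbex : ∃ b ∈ A, ¬ r b c := by
    by_contra h
    push_neg at h
    have hsub : A ⊆ {y | r y c} := fun y hy => h y hy
    have hle : #A ≤ #({y | r y c} : Set V) := Cardinal.mk_le_mk_of_subset hsub
    rw [hAcard] at hle
    exact absurd (hle.trans (hseg c)) (not_le.mpr (Order.lt_succ κ))
  obtain ⟨b, hbA, hbc⟩ := hbex
  have htb : ∀ t ∈ T', r t b := by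
    intro t ht
    rcases trichotomous_of r b c with h | h | h
    · exact absurd h hbc
    · have := hcb t ht
      rwa [← h] at this
    · exact (inferInstance : IsTrans V r).trans _ _ _ (hcb t ht) h
  have hS₀b : ∀ x ∈ S₀, r x b := fun x hx => htb x (Set.mem_insert_of_mem _ hx)
  obtain ⟨a, haS, haιS, haι⟩ := hmeet b S₀ hS₀ hS₀b ⟨i, htb i (Set.mem_insert i S₀), hSi⟩
  have hra : r a b := hS₀b a haS
  have hra' : r (ι b a) b := hS₀b _ haιS
  have hirr : ∀ x : V, ¬ r x x := fun x hx => hasymm hx hx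
  have hab : a ≠ b := fun h => hirr b (h ▸ hra)
  have ha'b : ι b a ≠ b := by
    intro h
    have h2 := hra'
    rw [h] at h2
    exact hirr b h2
  have he1 : π s(a, b) = s(ι b a, b) := hπcomp a b hra haι
  have he2 : π s(ι b a, b) = s(a, b) := by
    have h0 : ι b (ι b a) ≠ ι b a := by
      rw [hinv b a]; exact fun h => haι h.symm
    have hcmp := hπcomp (ι b a) b hra' h0
    rw [hinv b a] at hcmp
    exact hcmp
  have hedge_ne : s(a, b) ≠ s(ι b a, b) := by
    intro h
    rw [Sym2.eq_iff] at h
    rcases h with ⟨h1, _⟩ | ⟨h1, h2⟩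
    · exact haι h1.symm
    · exact hab h1
  obtain ⟨γ₁, hγ₁, hm₁, hmv₁⟩ := hclaim a b (hS₀A haS) hbA hab
  obtain ⟨γ₂, hγ₂, hm₂, hmv₂⟩ := hclaim (ι b a) b (hS₀A haιS) hbA ha'b
  exact hdeath p hp γ₁ hγ₁ γ₂ hγ₂ hm₁ hm₂
    (by rw [hmv₁, hmv₂]; exact he1)
    (by rw [hmv₂, hmv₁]; exact he2)
    (by rw [hmv₁, hmv₂]; exact hedge_ne)
end

section
/- Assume that every family of at most ℵ₁ infinite subsets of ℕ with the strong finite intersection property has an infinite pseudo-intersection (i.e. ℵ₁ < 𝔭). Then Maker has a winning strategy in the Maker-Breaker game MB(K_{ω,ω₁}, K_{ω,ω₁}). -/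
open Cardinal

universe u v

/-- The family `F` of subsets of `ℕ` has the strong finite intersection
property: the intersection of any finitely many members of `F` is infinite. -/
def HasSFIP (F : Set (Set ℕ)) : Prop :=
  ∀ S : Finset (Set ℕ), ↑S ⊆ F → (⋂₀ (↑S : Set (Set ℕ))).Infinite

namespace MBAux

variable {A B : Type}

def edg (a : A) (b : B) : Sym2 (A ⊕ B) := s(Sum.inl a, Sum.inr b)

lemma edg_inj : Function.Injective2 (edg (A := A) (B := B)) := by
  intro a a' b b' h
  simp only [edg, Sym2.eq, Sym2.rel_iff', Prod.mk.injEq, Prod.swap_prod_mk] at h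
  rcases h with ⟨h1, h2⟩ | ⟨h1, h2⟩ <;> simp_all

lemma edg_mem_edgeSet (a : A) (b : B) : edg a b ∈ (completeBipartiteGraph A B).edgeSet := by
  simp [edg, SimpleGraph.mem_edgeSet]

open Classical in
/-- a choice function on nonempty collections of sets of naturals -/
noncomputable def pick (C : Set (Set ℕ)) : Set ℕ :=
  if h : C.Nonempty then h.choose else Set.univ

lemma pick_mem {C : Set (Set ℕ)} (h : C.Nonempty) : pick C ∈ C := by
  rw [pick, dif_pos h]; exact h.choose_spec

open Classical in
noncomputable def bpick [Nonempty B] (S : Set B) : B :=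
  if h : S.Nonempty then h.choose else Classical.arbitrary B

lemma bpick_mem [Nonempty B] {S : Set B} (h : S.Nonempty) : bpick S ∈ S := by
  rw [bpick, dif_pos h]; exact h.choose_spec

/-- the start of stage `α`. -/
def stg (α : Ordinal.{0}) : Ordinal.{0} := 2 * (Ordinal.omega0 * α)

lemma stg_mono {α β : Ordinal.{0}} (h : α ≤ β) : stg α ≤ stg β :=
  mul_le_mul_right (mul_le_mul_right h _) _

def mkClaims (eA : ℕ → A) (h : Ordinal.{0} → Sym2 (A ⊕ B)) (γ0 : Ordinal.{0}) (b : B) : Set ℕ :=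
  {n | ∃ γ, γ < γ0 ∧ makerTurn γ ∧ h γ = edg (eA n) b}

def untouched (h : Ordinal.{0} → Sym2 (A ⊕ B)) (γ0 : Ordinal.{0}) (b : B) : Prop :=
  ∀ γ < γ0, ∀ a : A, h γ ≠ edg a b

noncomputable def bst [Nonempty B] (h : Ordinal.{0} → Sym2 (A ⊕ B)) (α : Ordinal.{0}) : B :=
  bpick {b | untouched h (stg α) b}

noncomputable def Tst (eA : ℕ → A) [Nonempty B] (h : Ordinal.{0} → Sym2 (A ⊕ B)) (α : Ordinal.{0}) : Set ℕ :=
  pick {P : Set ℕ | P.Infinite ∧ ∀ β, (hb : β < α) →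
      (P \ (Tst eA h β ∩ mkClaims eA h (stg (β + 1)) (bst h β))).Finite}
termination_by α

/-- the secured set of stage `α`: the part of `T_α` claimed by Maker in column `b_α`. -/
noncomputable def sec (eA : ℕ → A) [Nonempty B] (h : Ordinal.{0} → Sym2 (A ⊕ B)) (α : Ordinal.{0}) : Set ℕ :=
  Tst eA h α ∩ mkClaims eA h (stg (α + 1)) (bst h α)

lemma Tst_spec (eA : ℕ → A) [Nonempty B] (h : Ordinal.{0} → Sym2 (A ⊕ B)) (α : Ordinal.{0})
    (hP : ∃ P : Set ℕ, P.Infinite ∧ ∀ β, β < α → (P \ sec eA h β).Finite) :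
    (Tst eA h α).Infinite ∧ ∀ β, β < α → (Tst eA h α \ sec eA h β).Finite := by
  rw [Tst]
  have : {P : Set ℕ | P.Infinite ∧ ∀ β, (hb : β < α) →
      (P \ (Tst eA h β ∩ mkClaims eA h (stg (β + 1)) (bst h β))).Finite}.Nonempty := by
    obtain ⟨P, h1, h2⟩ := hP; exact ⟨P, h1, fun β hb => h2 β hb⟩
  exact pick_mem this

-- congruence lemmas
lemma mkClaims_congr {eA : ℕ → A} {h h' : Ordinal.{0} → Sym2 (A ⊕ B)} {γ0 : Ordinal.{0}}
    (hag : ∀ β < γ0, h β = h' β) (b : B) : mkClaims eA h γ0 b = mkClaims eA h' γ0 b := by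
  ext n; unfold mkClaims
  constructor <;> rintro ⟨γ, h1, h2, h3⟩ <;> exact ⟨γ, h1, h2, by rw [← h3, hag γ h1]⟩

lemma untouched_congr {h h' : Ordinal.{0} → Sym2 (A ⊕ B)} {γ0 : Ordinal.{0}}
    (hag : ∀ β < γ0, h β = h' β) (b : B) : untouched h γ0 b ↔ untouched h' γ0 b := by
  unfold untouched
  constructor <;> intro H γ hγ a <;> [rw [← hag γ hγ]; rw [hag γ hγ]] <;> exact H γ hγ a

lemma bst_congr [Nonempty B] {h h' : Ordinal.{0} → Sym2 (A ⊕ B)} {α : Ordinal.{0}}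
    (hag : ∀ β < stg α, h β = h' β) : bst h α = bst h' α := by
  unfold bst
  congr 1
  ext b
  exact untouched_congr hag b

lemma stg_succ_le {β α : Ordinal.{0}} (h : β < α) : stg (β + 1) ≤ stg α :=
  stg_mono (Order.succ_le_of_lt h)

lemma Tst_congr (eA : ℕ → A) [Nonempty B] {h h' : Ordinal.{0} → Sym2 (A ⊕ B)} (α : Ordinal.{0})
    (hag : ∀ β < stg α, h β = h' β) : Tst eA h α = Tst eA h' α := by
  induction α using Ordinal.induction with
  | h α IH =>
    rw [Tst, Tst]
    refine congrArg pick ?_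
    ext P
    constructor <;> rintro ⟨h1, H⟩ <;> refine ⟨h1, fun β hb => ?_⟩
    · rw [← IH β hb (fun γ hγ => hag γ (hγ.trans_le (stg_mono hb.le))),
        ← mkClaims_congr (fun γ hγ => hag γ (hγ.trans_le (stg_succ_le hb))) _,
        ← bst_congr (fun γ hγ => hag γ (hγ.trans_le (stg_mono hb.le)))]
      exact H β hb
    · rw [IH β hb (fun γ hγ => hag γ (hγ.trans_le (stg_mono hb.le))),
        mkClaims_congr (fun γ hγ => hag γ (hγ.trans_le (stg_succ_le hb))) _,
        bst_congr (fun γ hγ => hag γ (hγ.trans_le (stg_mono hb.le)))]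
      exact H β hb

lemma sec_congr (eA : ℕ → A) [Nonempty B] {h h' : Ordinal.{0} → Sym2 (A ⊕ B)} (α : Ordinal.{0})
    (hag : ∀ β < stg (α + 1), h β = h' β) : sec eA h α = sec eA h' α := by
  unfold sec
  rw [Tst_congr eA α (fun γ hγ => hag γ (hγ.trans_le (stg_mono (Order.le_succ α)))),
    mkClaims_congr hag, bst_congr (fun γ hγ => hag γ (hγ.trans_le (stg_mono (Order.le_succ α))))]


-- ordinal helper lemmas
lemma makerTurn_two_mul (δ : Ordinal.{0}) : makerTurn (2 * δ) := by
  have h2 : (2:Ordinal.{0}) ≠ 0 := two_ne_zero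
  show 2 * δ % 2 = 0
  rw [Ordinal.mod_def, Ordinal.mul_div_cancel δ h2, Ordinal.sub_self]

/-- the stage index of a turn -/
noncomputable def stIdx (γ : Ordinal.{0}) : Ordinal.{0} := γ / 2 / Ordinal.omega0

lemma stg_stIdx_le (γ : Ordinal.{0}) : stg (stIdx γ) ≤ γ := by
  have h1 : Ordinal.omega0 * (γ / 2 / Ordinal.omega0) ≤ γ / 2 := Ordinal.mul_div_le _ _
  have h2 : 2 * (γ / 2) ≤ γ := by
    conv_rhs => rw [← Ordinal.div_add_mod γ 2]
    exact le_self_add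
  exact le_trans (mul_le_mul_right h1 2) h2

lemma stIdx_eq (α : Ordinal.{0}) (i : ℕ) : stIdx (2 * (Ordinal.omega0 * α + i)) = α := by
  unfold stIdx
  rw [Ordinal.mul_div_cancel _ two_ne_zero,
    Ordinal.mul_add_div _ Ordinal.omega0_ne_zero,
    Ordinal.div_eq_zero_of_lt (Ordinal.nat_lt_omega0 i), add_zero]

lemma turn_eq (α : Ordinal.{0}) (i : ℕ) :
    2 * (Ordinal.omega0 * α + i) = stg α + 2 * (i : Ordinal.{0}) := by
  rw [mul_add, stg]

lemma turn_lt_stg_succ (α : Ordinal.{0}) (i : ℕ) :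
    2 * (Ordinal.omega0 * α + i) = stg α + 2 * (i : Ordinal.{0}) ∧
      stg α + 2 * (i : Ordinal.{0}) < stg (α + 1) := by
  refine ⟨turn_eq α i, ?_⟩
  have : stg (α+1) = stg α + 2 * Ordinal.omega0 := by rw [stg, mul_add, mul_one, mul_add, stg]
  rw [this]
  have h2i : 2 * (i : Ordinal.{0}) < 2 * Ordinal.omega0 :=
    mul_lt_mul_of_pos_left (Ordinal.nat_lt_omega0 i) (by norm_num)
  exact add_lt_add_right h2i _

/-- the intended move of Maker at turn `γ`. -/
noncomputable def plan (eA : ℕ → A) [Nonempty B] (h : Ordinal.{0} → Sym2 (A ⊕ B))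
    (γ : Ordinal.{0}) : Sym2 (A ⊕ B) :=
  edg (eA (sInf {n | n ∈ Tst eA h (stIdx γ) ∧ ∀ β < γ, h β ≠ edg (eA n) (bst h (stIdx γ))}))
    (bst h (stIdx γ))

lemma plan_congr (eA : ℕ → A) [Nonempty B] {h h' : Ordinal.{0} → Sym2 (A ⊕ B)} (γ : Ordinal.{0})
    (hag : ∀ β < γ, h β = h' β) : plan eA h γ = plan eA h' γ := by
  have hsub : ∀ β < stg (stIdx γ), h β = h' β :=
    fun β hβ => hag β (hβ.trans_le (stg_stIdx_le γ))
  unfold plan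
  rw [Tst_congr eA _ hsub, bst_congr hsub]
  have hset : {n | n ∈ Tst eA h' (stIdx γ) ∧ ∀ β < γ, h β ≠ edg (eA n) (bst h' (stIdx γ))}
      = {n | n ∈ Tst eA h' (stIdx γ) ∧ ∀ β < γ, h' β ≠ edg (eA n) (bst h' (stIdx γ))} := by
    ext n
    simp only [Set.mem_setOf_eq, and_congr_right_iff]
    intro _
    constructor <;> intro H β hβ <;> [rw [← hag β hβ]; rw [hag β hβ]] <;> exact H β hβ
  rw [hset]

variable (A B) in
noncomputable def junkEdge [Nonempty A] [Nonempty B] : Sym2 (A ⊕ B) :=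
  edg (Classical.arbitrary A) (Classical.arbitrary B)

/-- extend a history to a total function on ordinals -/
noncomputable def histFun [Nonempty A] [Nonempty B] (γ : Ordinal.{0})
    (hist : ∀ β : Ordinal.{0}, β < γ → Sym2 (A ⊕ B)) : Ordinal.{0} → Sym2 (A ⊕ B) :=
  fun β => if hb : β < γ then hist β hb else junkEdge A B

open Classical in
/-- Maker's strategy. -/
noncomputable def mstrat (eA : ℕ → A) [Nonempty A] [Nonempty B] : MBStrategy (Sym2 (A ⊕ B)) :=
  fun γ hist =>
    let e := plan eA (histFun γ hist) γ
    if e ∈ (completeBipartiteGraph A B).edgeSet ∧ ∀ β hb, hist β hb ≠ e then e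
    else if hfree : ∃ e' ∈ (completeBipartiteGraph A B).edgeSet, ∀ β hb, hist β hb ≠ e' then
      hfree.choose
    else e

lemma mstrat_legal (eA : ℕ → A) [Nonempty A] [Nonempty B] :
    (mstrat eA).IsLegal (completeBipartiteGraph A B).edgeSet makerTurn := by
  intro γ hist _ _ _ hex
  unfold mstrat
  by_cases hc : plan eA (histFun γ hist) γ ∈ (completeBipartiteGraph A B).edgeSet ∧
      ∀ β hb, hist β hb ≠ plan eA (histFun γ hist) γ
  · simp only [if_pos hc]; exact hc
  · simp only [if_neg hc, dif_pos hex]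
    obtain ⟨h1, h2⟩ := hex.choose_spec
    exact ⟨h1, h2⟩

lemma mstrat_eq_plan (eA : ℕ → A) [Nonempty A] [Nonempty B] (γ : Ordinal.{0})
    (hist : ∀ β : Ordinal.{0}, β < γ → Sym2 (A ⊕ B))
    (hc : plan eA (histFun γ hist) γ ∈ (completeBipartiteGraph A B).edgeSet ∧
      ∀ β hb, hist β hb ≠ plan eA (histFun γ hist) γ) :
    mstrat eA γ hist = plan eA (histFun γ hist) γ := by
  unfold mstrat
  simp only [if_pos hc]


end MBAux

namespace MBAux
section Play

variable {A B : Type} [Nonempty A] [Nonempty B]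

/-- the completed history of a play, as a total function -/
noncomputable def Hfun (p : MBPlay (completeBipartiteGraph A B).edgeSet) :
    Ordinal.{0} → Sym2 (A ⊕ B) :=
  histFun p.len p.move

lemma Hfun_eq (p : MBPlay (completeBipartiteGraph A B).edgeSet) {γ : Ordinal.{0}}
    (h : γ < p.len) : Hfun p γ = p.move γ h := by
  unfold Hfun histFun
  rw [dif_pos h]

lemma stg_lt {α : Ordinal.{0}} (hα : α < (Cardinal.aleph 1).ord) :
    stg α < (Cardinal.aleph 1).ord := by
  rw [Cardinal.lt_ord] at hα ⊢
  rw [stg, Ordinal.card_mul, Ordinal.card_mul, Ordinal.card_ofNat, Ordinal.card_omega0]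
  have h0 : ℵ₀ ≤ Cardinal.aleph 1 := Cardinal.aleph0_le_aleph 1
  exact Cardinal.mul_lt_of_lt h0 ((Cardinal.nat_lt_aleph0 2).trans_le h0)
    (Cardinal.mul_lt_of_lt h0 Cardinal.aleph0_lt_aleph_one hα)

lemma add_lt_omega1 {γ δ : Ordinal.{0}} (hγ : γ < (Cardinal.aleph 1).ord)
    (hδ : δ < (Cardinal.aleph 1).ord) : γ + δ < (Cardinal.aleph 1).ord := by
  rw [Cardinal.lt_ord] at hγ hδ ⊢
  rw [Ordinal.card_add]
  exact Cardinal.add_lt_of_lt (Cardinal.aleph0_le_aleph 1) hγ hδ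

lemma omega0_lt_omega1 : Ordinal.omega0 < (Cardinal.aleph 1).ord := by
  rw [Cardinal.lt_ord, Ordinal.card_omega0]; exact Cardinal.aleph0_lt_aleph_one

lemma len_ge (p : MBPlay (completeBipartiteGraph A B).edgeSet)
    (hB : #B = Cardinal.aleph 1) : (Cardinal.aleph 1).ord ≤ p.len := by
  rw [Cardinal.ord_le, ← hB]
  have a0 : A := Classical.arbitrary A
  have key : ∀ b : B, ∃ q : Set.Iio p.len, p.move q.1 q.2 = edg a0 b := by
    intro b
    obtain ⟨γ, hγ, he⟩ := p.complete (edg a0 b) (edg_mem_edgeSet a0 b)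
    exact ⟨⟨γ, hγ⟩, he⟩
  choose φ hφ using key
  have hinj : Function.Injective φ := by
    intro b b' hbb
    have h1 := hφ b
    rw [hbb, hφ b'] at h1
    exact (edg_inj h1.symm).2
  have h3 : Cardinal.lift.{1,0} #B ≤ Cardinal.lift.{0,1} #↥(Set.Iio p.len) :=
    Cardinal.lift_mk_le'.mpr ⟨φ, hinj⟩
  rw [Ordinal.mk_Iio_ordinal, Cardinal.lift_lift] at h3
  exact Cardinal.lift_le.mp h3

lemma exists_untouched (p : MBPlay (completeBipartiteGraph A B).edgeSet)
    (hB : #B = Cardinal.aleph 1) {γ0 : Ordinal.{0}} (hγ0 : γ0 < (Cardinal.aleph 1).ord) :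
    ∃ b, untouched (Hfun p) γ0 b := by
  by_contra hno
  push_neg at hno
  have key : ∀ b : B, ∃ q : Set.Iio γ0, ∃ a : A, Hfun p q.1 = edg a b := by
    intro b
    have hb := hno b
    unfold untouched at hb
    push_neg at hb
    obtain ⟨γ, hγ, a, ha⟩ := hb
    exact ⟨⟨γ, hγ⟩, a, ha⟩
  choose φ ψ hφ using key
  have hinj : Function.Injective φ := by
    intro b b' hbb
    have h1 := hφ b
    rw [hbb, hφ b'] at h1
    exact (edg_inj h1.symm).2
  have h3 : Cardinal.lift.{1,0} #B ≤ Cardinal.lift.{0,1} #↥(Set.Iio γ0) :=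
    Cardinal.lift_mk_le'.mpr ⟨φ, hinj⟩
  rw [Ordinal.mk_Iio_ordinal, Cardinal.lift_lift] at h3
  have h4 : #B ≤ γ0.card := Cardinal.lift_le.mp h3
  rw [hB] at h4
  rw [Cardinal.lt_ord] at hγ0
  exact absurd (h4.trans_lt hγ0) (lt_irrefl _)

end Play
end MBAux


namespace MBAux
section Stage

variable {A B : Type} [Nonempty A] [Nonempty B]

lemma two_nat_lt_omega0 (i : ℕ) : 2 * (i : Ordinal.{0}) < Ordinal.omega0 := by
  have h := Ordinal.nat_lt_omega0 (2 * i)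
  push_cast at h
  exact h

lemma sec_infinite (eA : ℕ → A) (heA : Function.Injective eA)
    (p : MBPlay (completeBipartiteGraph A B).edgeSet)
    (hfol : p.Follows makerTurn (mstrat eA)) (hB : #B = Cardinal.aleph 1)
    {α : Ordinal.{0}} (hα : α < (Cardinal.aleph 1).ord)
    (hT : (Tst eA (Hfun p) α).Infinite) : (sec eA (Hfun p) α).Infinite := by
  set H := Hfun p with hH
  set b := bst H α with hb
  have hbun : untouched H (stg α) b := by
    have hne : {b' : B | untouched H (stg α) b'}.Nonempty := exists_untouched p hB (stg_lt hα)
    exact bpick_mem hne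
  set γf : ℕ → Ordinal.{0} := fun i => 2 * (Ordinal.omega0 * α + i) with hγf
  have hγeq : ∀ i : ℕ, γf i = stg α + 2 * (i : Ordinal.{0}) := fun i => turn_eq α i
  have hγlt : ∀ i, γf i < (Cardinal.aleph 1).ord := by
    intro i
    rw [hγeq i]
    exact add_lt_omega1 (stg_lt hα) ((two_nat_lt_omega0 i).trans omega0_lt_omega1)
  have hγlen : ∀ i, γf i < p.len := fun i => (hγlt i).trans_le (len_ge p hB)
  have hmk : ∀ i, makerTurn (γf i) := fun i => makerTurn_two_mul _
  have key : ∀ i : ℕ, ∃ n : ℕ, n ∈ Tst eA H α ∧ p.move (γf i) (hγlen i) = edg (eA n) b := by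
    intro i
    -- the set of columns already used in row b is finite
    have hbad : {n : ℕ | ∃ β, β < γf i ∧ H β = edg (eA n) b}.Finite := by
      have hsub : {n : ℕ | ∃ β, β < γf i ∧ H β = edg (eA n) b} ⊆
          ⋃ j ∈ {j : ℕ | j < 2 * i}, {n : ℕ | H (stg α + j) = edg (eA n) b} := by
        rintro n ⟨β, hβ, he⟩
        have hβge : stg α ≤ β := by
          by_contra hlt
          push_neg at hlt
          exact hbun β hlt (eA n) he
        have hβlt : β < stg α + 2 * (i : Ordinal.{0}) := by rw [← hγeq i]; exact hβ
        have hsub2 : β - stg α < 2 * (i : Ordinal.{0}) := by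
          rw [← add_lt_add_iff_left (a := stg α), Ordinal.add_sub_cancel_of_le hβge]
          exact hβlt
        obtain ⟨j, hj⟩ := Ordinal.lt_omega0.mp (hsub2.trans (two_nat_lt_omega0 i))
        have hjlt : j < 2 * i := by
          rw [hj] at hsub2
          have : ((j : ℕ) : Ordinal.{0}) < ((2 * i : ℕ) : Ordinal.{0}) := by
            push_cast
            exact hsub2
          exact_mod_cast this
        refine Set.mem_iUnion₂.mpr ⟨j, hjlt, ?_⟩
        have : stg α + (j : Ordinal.{0}) = β := by rw [← hj, Ordinal.add_sub_cancel_of_le hβge]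
        rw [this]
        exact he
      refine Set.Finite.subset (Set.Finite.biUnion (Set.finite_lt_nat (2 * i)) ?_) hsub
      intro j _
      apply Set.Subsingleton.finite
      intro n hn n' hn'
      exact heA (edg_inj (hn.symm.trans hn')).1
    have hSne : {n : ℕ | n ∈ Tst eA H α ∧ ∀ β < γf i, H β ≠ edg (eA n) b}.Nonempty := by
      obtain ⟨n0, hn0T, hn0b⟩ := (hT.diff hbad).nonempty
      exact ⟨n0, hn0T, fun β hβ he => hn0b ⟨β, hβ, he⟩⟩
    set n := sInf {n : ℕ | n ∈ Tst eA H α ∧ ∀ β < γf i, H β ≠ edg (eA n) b} with hn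
    have hnS := Nat.sInf_mem hSne
    rw [← hn] at hnS
    obtain ⟨hnT, hnfresh⟩ := hnS
    have hfol_i := hfol (γf i) (hγlen i) (hmk i)
    set hist : ∀ β : Ordinal.{0}, β < γf i → Sym2 (A ⊕ B) :=
      fun β hβ => p.move β (hβ.trans (hγlen i)) with hhist
    have hagree : ∀ β < γf i, histFun (γf i) hist β = H β := by
      intro β hβ
      unfold histFun
      rw [dif_pos hβ]
      exact (Hfun_eq p (hβ.trans (hγlen i))).symm
    have hplan2 : plan eA H (γf i) = edg (eA n) b := by
      have hidx : stIdx (γf i) = α := stIdx_eq α i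
      rw [plan, hidx, ← hb, ← hn]
    have hplan : plan eA (histFun (γf i) hist) (γf i) = edg (eA n) b :=
      (plan_congr eA (γf i) hagree).trans hplan2
    have hguard : plan eA (histFun (γf i) hist) (γf i) ∈ (completeBipartiteGraph A B).edgeSet ∧
        ∀ β hβ, hist β hβ ≠ plan eA (histFun (γf i) hist) (γf i) := by
      rw [hplan]
      refine ⟨edg_mem_edgeSet _ _, fun β hβ => ?_⟩
      have : hist β hβ = H β := (Hfun_eq p (hβ.trans (hγlen i))).symm
      rw [this]
      exact hnfresh β hβ
    refine ⟨n, hnT, ?_⟩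
    rw [hfol_i, mstrat_eq_plan eA (γf i) hist hguard, hplan]
  choose nf hnfT hnfe using key
  have hinj : Function.Injective nf := by
    intro i i' hii
    have h1 := hnfe i
    have h2 := hnfe i'
    rw [hii] at h1
    have hγγ := p.move_inj _ _ _ _ (h1.trans h2.symm)
    have hdd := congrArg (fun x => x / 2) hγγ
    simp only [hγf] at hdd
    rw [Ordinal.mul_div_cancel _ two_ne_zero, Ordinal.mul_div_cancel _ two_ne_zero,
      add_right_inj] at hdd
    exact_mod_cast hdd
  have hmem : ∀ i, nf i ∈ sec eA H α := by
    intro i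
    refine ⟨hnfT i, ⟨γf i, ?_, hmk i, ?_⟩⟩
    · rw [hγeq i]
      exact (turn_lt_stg_succ α i).2
    · rw [← hb, hH, Hfun_eq p (hγlen i)]
      exact hnfe i
  exact Set.infinite_of_injective_forall_mem hinj hmem

end Stage
end MBAux


namespace MBAux
section Master

variable {A B : Type} [Nonempty A] [Nonempty B]

lemma mk_fam_le (sec' : Ordinal.{0} → Set ℕ) {c : Ordinal.{0}}
    (hc : c ≤ (Cardinal.aleph 1).ord) :
    #{S : Set ℕ | ∃ β, β < c ∧ S = sec' β} ≤ Cardinal.aleph 1 := by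
  have h3 : Cardinal.lift.{1,0} #{S : Set ℕ | ∃ β, β < c ∧ S = sec' β} ≤
      Cardinal.lift.{0,1} #↥(Set.Iio c) := by
    refine Cardinal.lift_mk_le'.mpr ⟨⟨fun S => ⟨S.2.choose, S.2.choose_spec.1⟩, ?_⟩⟩
    intro S S' hSS
    have h1 := S.2.choose_spec.2
    have h2 := S'.2.choose_spec.2
    have hv : S.2.choose = S'.2.choose := Subtype.mk_eq_mk.mp hSS
    rw [hv, ← h2] at h1
    exact Subtype.ext h1
  rw [Ordinal.mk_Iio_ordinal, Cardinal.lift_lift] at h3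
  have h4 := Cardinal.lift_le.mp h3
  calc #{S : Set ℕ | ∃ β, β < c ∧ S = sec' β} ≤ c.card := h4
    _ ≤ ((Cardinal.aleph 1).ord).card := Ordinal.card_le_card hc
    _ = Cardinal.aleph 1 := Cardinal.card_ord _

lemma hasSFIP_fam (sec' : Ordinal.{0} → Set ℕ) (c : Ordinal.{0})
    (hinf : ∀ β < c, (sec' β).Infinite)
    (hdiff : ∀ β β', β' < β → β < c → (sec' β \ sec' β').Finite) :
    HasSFIP {S : Set ℕ | ∃ β, β < c ∧ S = sec' β} := by
  intro S hS
  rcases S.eq_empty_or_nonempty with hSe | hSne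
  · rw [hSe]
    simp only [Finset.coe_empty, Set.sInter_empty]
    exact Set.infinite_univ
  have hw : ∀ s ∈ S, ∃ β, β < c ∧ s = sec' β := fun s hs => hS hs
  set T : Finset Ordinal.{0} := S.attach.image (fun s => (hw s.1 s.2).choose) with hT
  have hTne : T.Nonempty := (Finset.attach_nonempty_iff.mpr hSne).image _
  set M := T.max' hTne with hM
  have hMmem : M ∈ T := T.max'_mem hTne
  have hMlt : M < c := by
    rw [hT] at hMmem
    obtain ⟨s, _, hs⟩ := Finset.mem_image.mp hMmem
    rw [← hs]
    exact (hw s.1 s.2).choose_spec.1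
  have key : ∀ s ∈ S, (sec' M \ s).Finite := by
    intro s hs
    have hspec := (hw s hs).choose_spec
    have hle : (hw s hs).choose ≤ M := by
      apply Finset.le_max'
      rw [hT]
      exact Finset.mem_image.mpr ⟨⟨s, hs⟩, Finset.mem_attach _ _, rfl⟩
    rcases eq_or_lt_of_le hle with heq | hlt
    · rw [hspec.2, ← heq]
      simp only [Set.diff_self]
      exact Set.finite_empty
    · rw [hspec.2]
      exact hdiff M _ hlt hMlt
  have hbig : (sec' M \ ⋃ s ∈ S, (sec' M \ (s : Set ℕ))).Infinite :=
    (hinf M hMlt).diff (Set.Finite.biUnion S.finite_toSet key)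
  refine hbig.mono ?_
  rintro x ⟨hx1, hx2⟩
  rw [Set.mem_sInter]
  intro t ht
  by_contra hxt
  exact hx2 (Set.mem_biUnion ht ⟨hx1, hxt⟩)

lemma master (eA : ℕ → A) (heA : Function.Injective eA)
    (p : MBPlay (completeBipartiteGraph A B).edgeSet)
    (hfol : p.Follows makerTurn (mstrat eA)) (hB : #B = Cardinal.aleph 1)
    (hp : ∀ F : Set (Set ℕ), (∀ A ∈ F, A.Infinite) → #F ≤ Cardinal.aleph 1 → HasSFIP F →
      ∃ P : Set ℕ, P.Infinite ∧ ∀ A ∈ F, (P \ A).Finite) :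
    ∀ α : Ordinal.{0}, α < (Cardinal.aleph 1).ord →
      ((Tst eA (Hfun p) α).Infinite ∧
        (∀ β, β < α → (Tst eA (Hfun p) α \ sec eA (Hfun p) β).Finite)) ∧
      (sec eA (Hfun p) α).Infinite := by
  intro α
  induction α using Ordinal.induction with
  | h α IH =>
    intro hα
    have hspec : (Tst eA (Hfun p) α).Infinite ∧
        ∀ β, β < α → (Tst eA (Hfun p) α \ sec eA (Hfun p) β).Finite := by
      apply Tst_spec
      obtain ⟨P, hP1, hP2⟩ := hp {S : Set ℕ | ∃ β, β < α ∧ S = sec eA (Hfun p) β}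
        (by rintro S ⟨β, hβ, rfl⟩; exact (IH β hβ (hβ.trans hα)).2)
        (mk_fam_le _ hα.le)
        (hasSFIP_fam _ α (fun β hβ => (IH β hβ (hβ.trans hα)).2)
          (fun β β' hβ'β hβα => Set.Finite.subset
            ((IH β hβα (hβα.trans hα)).1.2 β' hβ'β)
            (Set.diff_subset_diff_left Set.inter_subset_left)))
      exact ⟨P, hP1, fun β hβ => hP2 _ ⟨β, hβ, rfl⟩⟩
    exact ⟨hspec, sec_infinite eA heA p hfol hB hα hspec.1⟩

lemma bst_ne (eA : ℕ → A) (heA : Function.Injective eA)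
    (p : MBPlay (completeBipartiteGraph A B).edgeSet)
    (hfol : p.Follows makerTurn (mstrat eA)) (hB : #B = Cardinal.aleph 1)
    (hp : ∀ F : Set (Set ℕ), (∀ A ∈ F, A.Infinite) → #F ≤ Cardinal.aleph 1 → HasSFIP F →
      ∃ P : Set ℕ, P.Infinite ∧ ∀ A ∈ F, (P \ A).Finite)
    {β α : Ordinal.{0}} (hβα : β < α) (hα : α < (Cardinal.aleph 1).ord) :
    bst (Hfun p) α ≠ bst (Hfun p) β := by
  have hsec := (master eA heA p hfol hB hp β (hβα.trans hα)).2
  obtain ⟨n, -, γ, hγ, -, hγe⟩ := hsec.nonempty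
  have hbun : untouched (Hfun p) (stg α) (bst (Hfun p) α) := by
    have hne : {b' : B | untouched (Hfun p) (stg α) b'}.Nonempty :=
      exists_untouched p hB (stg_lt hα)
    exact bpick_mem hne
  intro heq
  exact hbun γ (hγ.trans_le (stg_succ_le hβα)) (eA n) (heq ▸ hγe)

end Master
end MBAux


/-- Assume every family of at most `ℵ₁` infinite subsets of `ℕ`
with the strong finite intersection property has an infinite
pseudo-intersection (i.e. `ℵ₁ < 𝔭`).  Then Maker has a winning strategy in the
Maker–Breaker game `MB(K_{ω,ω₁}, K_{ω,ω₁})`. -/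
theorem makerWins_completeBipartite_omega_omega1
    (hp : ∀ F : Set (Set ℕ), (∀ A ∈ F, A.Infinite) → #F ≤ Cardinal.aleph 1 → HasSFIP F →
      ∃ P : Set ℕ, P.Infinite ∧ ∀ A ∈ F, (P \ A).Finite)
    (A B : Type) (hA : #A = ℵ₀) (hB : #B = Cardinal.aleph 1) :
    MakerWins (completeBipartiteGraph A B) (completeBipartiteGraph A B) := by
  obtain ⟨eqA⟩ : Nonempty (A ≃ ℕ) := Cardinal.eq.mp (hA.trans Cardinal.mk_nat.symm)
  haveI : Nonempty A := ⟨eqA.symm 0⟩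
  haveI : Nonempty B := Cardinal.mk_ne_zero_iff.mp (by rw [hB]; exact (Cardinal.aleph_pos 1).ne')
  set eA : ℕ → A := ⇑eqA.symm with heAdef
  have heA : Function.Injective eA := eqA.symm.injective
  refine ⟨MBAux.mstrat eA, MBAux.mstrat_legal eA, ?_⟩
  intro p hfol
  set H : Ordinal.{0} → Sym2 (A ⊕ B) := MBAux.Hfun p with hHdef
  have hmaster := MBAux.master eA heA p hfol hB hp
  obtain ⟨P, hPinf, hPall⟩ := hp
    {S : Set ℕ | ∃ β, β < (Cardinal.aleph 1).ord ∧ S = MBAux.sec eA H β}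
    (by rintro S ⟨β, hβ, rfl⟩; exact (hmaster β hβ).2)
    (MBAux.mk_fam_le _ le_rfl)
    (MBAux.hasSFIP_fam _ _ (fun β hβ => (hmaster β hβ).2)
      (fun β β' h1 h2 => ((hmaster β h2).1.2 β' h1).subset
        (Set.diff_subset_diff_left Set.inter_subset_left)))
  have hPfin : ∀ β < (Cardinal.aleph 1).ord, (P \ MBAux.sec eA H β).Finite :=
    fun β hβ => hPall _ ⟨β, hβ, rfl⟩
  -- pigeonhole: uncountably many stages share the same finite difference
  have hfib : ∃ v : Set ℕ, v.Finite ∧ v ⊆ P ∧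
      ¬ ({β : Ordinal.{0} | β < (Cardinal.aleph 1).ord ∧
        P \ MBAux.sec eA H β = v}).Countable := by
    by_contra hno
    push_neg at hno
    have hcov : Set.Iio (Cardinal.aleph 1).ord ⊆
        ⋃ v ∈ {t : Set ℕ | t.Finite ∧ t ⊆ P},
          {β : Ordinal.{0} | β < (Cardinal.aleph 1).ord ∧ P \ MBAux.sec eA H β = v} := by
      intro β hβ
      exact Set.mem_biUnion ⟨hPfin β hβ, Set.diff_subset⟩ ⟨hβ, rfl⟩
    have hcnt : (Set.Iio (Cardinal.aleph 1).ord).Countable :=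
      ((Set.countable_setOf_finite_subset (Set.to_countable P)).biUnion
        (fun v hv => hno v hv.1 hv.2)).mono hcov
    have hmk : #(↥(Set.Iio (Cardinal.aleph 1).ord)) ≤ ℵ₀ :=
      Cardinal.mk_le_aleph0_iff.mpr (Set.countable_coe_iff.mpr hcnt)
    rw [Ordinal.mk_Iio_ordinal, Cardinal.card_ord] at hmk
    have : Cardinal.aleph 1 ≤ ℵ₀ := by
      apply Cardinal.lift_le.{1}.mp
      rw [Cardinal.lift_aleph0]
      exact hmk
    exact absurd this Cardinal.aleph0_lt_aleph_one.not_ge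
  obtain ⟨F₀, hF₀fin, hF₀P, hfib⟩ := hfib
  set fib := {β : Ordinal.{0} | β < (Cardinal.aleph 1).ord ∧ P \ MBAux.sec eA H β = F₀}
    with hfibdef
  -- B embeds into the fiber
  obtain ⟨ι⟩ : Nonempty (B ↪ ↥fib) := by
    rw [← Cardinal.lift_mk_le']
    have h1 : ℵ₀ < #↥fib := by
      by_contra hle
      push_neg at hle
      exact hfib (Set.countable_coe_iff.mp (Cardinal.mk_le_aleph0_iff.mp hle))
    have h2 : Order.succ (ℵ₀ : Cardinal.{1}) ≤ #↥fib := Order.succ_le_of_lt h1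
    rw [hB]
    have ha1 : Cardinal.lift.{1,0} (Cardinal.aleph 1) = Order.succ (ℵ₀ : Cardinal.{1}) := by
      rw [show (1 : Ordinal) = Order.succ 0 by simp, Cardinal.aleph_succ, Cardinal.lift_succ,
        Cardinal.aleph_zero, Cardinal.lift_aleph0]
    rw [ha1, Cardinal.lift_uzero]
    exact h2
  -- the infinite row set
  have hA' : (P \ F₀).Infinite := hPinf.diff hF₀fin
  set aemb : ℕ ↪ ↥(P \ F₀) := hA'.natEmbedding with haembdef
  set g1 : A → A := fun a => eA ((aemb (eqA a)) : ℕ) with hg1def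
  have hg1 : Function.Injective g1 :=
    fun a a' h => eqA.injective (aemb.injective (Subtype.coe_injective (heA h)))
  set g2 : B → B := fun b0 => MBAux.bst H ((ι b0) : Ordinal.{0}) with hg2def
  have hg2 : Function.Injective g2 := by
    intro b1 b2 h
    by_contra hne
    have hii : ((ι b1) : Ordinal.{0}) ≠ ((ι b2) : Ordinal.{0}) :=
      fun hh => hne (ι.injective (Subtype.ext hh))
    rcases hii.lt_or_gt with hlt | hlt
    · exact MBAux.bst_ne eA heA p hfol hB hp hlt (ι b2).2.1 h.symm
    · exact MBAux.bst_ne eA heA p hfol hB hp hlt (ι b1).2.1 h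
  have hclaim : ∀ (a : A) (b0 : B),
      s(Sum.inl (g1 a), Sum.inr (g2 b0)) ∈ p.claimed makerTurn := by
    intro a b0
    have hnP : ((aemb (eqA a)) : ℕ) ∈ P \ F₀ := (aemb (eqA a)).2
    have hβ : ((ι b0) : Ordinal.{0}) < (Cardinal.aleph 1).ord := (ι b0).2.1
    have hfibβ : P \ MBAux.sec eA H ((ι b0) : Ordinal.{0}) = F₀ := (ι b0).2.2
    have hnsec : ((aemb (eqA a)) : ℕ) ∈ MBAux.sec eA H ((ι b0) : Ordinal.{0}) := by
      by_contra hns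
      have hmem : ((aemb (eqA a)) : ℕ) ∈ P \ MBAux.sec eA H ((ι b0) : Ordinal.{0}) :=
        ⟨hnP.1, hns⟩
      rw [hfibβ] at hmem
      exact hnP.2 hmem
    obtain ⟨-, γ, hγlt, hγmk, hγe⟩ := hnsec
    have hγω1 : γ < (Cardinal.aleph 1).ord := by
      refine hγlt.trans (MBAux.stg_lt ?_)
      exact (Cardinal.isSuccLimit_ord (Cardinal.aleph0_le_aleph 1)).succ_lt hβ
    have hγlen : γ < p.len := hγω1.trans_le (MBAux.len_ge p hB)
    refine ⟨γ, hγlen, hγmk, ?_⟩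
    rw [← MBAux.Hfun_eq p hγlen, ← hHdef]
    exact hγe
  -- assemble the graph embedding
  refine ⟨⟨Sum.map g1 g2, ?_⟩, Function.Injective.sumMap hg1 hg2⟩
  intro u v huv
  rcases u with a | b <;> rcases v with a' | b'
  · simp [completeBipartiteGraph] at huv
  · rw [SimpleGraph.fromEdgeSet_adj]
    exact ⟨hclaim a b', by simp⟩
  · rw [SimpleGraph.fromEdgeSet_adj]
    refine ⟨?_, by simp⟩
    rw [Sym2.eq_swap]
    exact hclaim a' b
  · simp [completeBipartiteGraph] at huv
end

section
/- Let κ be a cardinal of uncountable cofinality and assume that every family of at most κ infinite subsets of ℕ with the strong finite intersection property has an infinite pseudo-intersection (i.e. κ < 𝔭). Then Maker has a winning strategy in the Maker-Breaker game MB(K_{ω,κ}, K_{ω,κ}). -/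
open Cardinal

universe u v

/- ===================  Auxiliary development  =================== -/

noncomputable section MakerAux

open Ordinal Set

attribute [local instance] Classical.propDecidable

namespace MakerAux

variable {A B : Type}

/-- The edge between the `a`-th vertex on the countable side and `b`. -/
def edg (eA : A ≃ ℕ) (a : ℕ) (b : B) : Sym2 (A ⊕ B) :=
  s(Sum.inl (eA.symm a), Sum.inr b)

/-- A junk element of `Sym2 (A ⊕ B)` that is not of the form `edg eA a b`. -/
def junk (eA : A ≃ ℕ) : Sym2 (A ⊕ B) :=
  s(Sum.inl (eA.symm 0), Sum.inl (eA.symm 0))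

theorem edg_inj {eA : A ≃ ℕ} {a a' : ℕ} {b b' : B}
    (h : edg eA a b = edg eA a' b') : a = a' ∧ b = b' := by
  rw [edg, edg, Sym2.eq_iff] at h
  rcases h with ⟨h1, h2⟩ | ⟨h1, h2⟩
  · exact ⟨eA.symm.injective (Sum.inl.inj h1), Sum.inr.inj h2⟩
  · exact absurd h1 (by simp)

theorem edg_ne_junk (eA : A ≃ ℕ) (a : ℕ) (b : B) : edg eA a b ≠ junk eA := by
  intro h
  rw [edg, junk, Sym2.eq_iff] at h
  rcases h with ⟨-, h2⟩ | ⟨-, h2⟩ <;> exact absurd h2 (by simp)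

/-- The set of board elements claimed before turn `γ`. -/
def Cl (c : Ordinal.{0} → Sym2 (A ⊕ B)) (γ : Ordinal.{0}) : Set (Sym2 (A ⊕ B)) :=
  c '' Set.Iio γ

theorem mem_Cl {c : Ordinal.{0} → Sym2 (A ⊕ B)} {γ : Ordinal.{0}} {e : Sym2 (A ⊕ B)} :
    e ∈ Cl c γ ↔ ∃ β < γ, c β = e := by
  simp [Cl]

theorem Cl_congr {c c' : Ordinal.{0} → Sym2 (A ⊕ B)} {γ : Ordinal.{0}}
    (h : ∀ β < γ, c β = c' β) : Cl c γ = Cl c' γ := by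
  ext e
  rw [mem_Cl, mem_Cl]
  constructor <;> rintro ⟨β, hβ, rfl⟩
  · exact ⟨β, hβ, (h β hβ).symm⟩
  · exact ⟨β, hβ, h β hβ⟩

/-- The ordinal below `o` corresponding to `i : o.toType`. -/
def idx (o : Ordinal.{0}) (i : o.ToType) : Ordinal.{0} :=
  (((Ordinal.ToType.mk (o := o))).symm i : Set.Iio o)

theorem idx_lt {o : Ordinal.{0}} (i : o.ToType) : idx o i < o :=
  (((Ordinal.ToType.mk (o := o))).symm i).2

theorem idx_inj {o : Ordinal.{0}} {i j : o.ToType} (h : idx o i = idx o j) : i = j := by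
  have := Subtype.ext (p := fun x => x ∈ Set.Iio o) h
  exact ((Ordinal.ToType.mk (o := o))).symm.injective this

theorem idx_surj {o β : Ordinal.{0}} (hβ : β < o) : ∃ i : o.ToType, idx o i = β := by
  refine ⟨(Ordinal.ToType.mk (o := o)) ⟨β, hβ⟩, ?_⟩
  rw [idx, OrderIso.symm_apply_apply]

theorem mk_Cl_le (c : Ordinal.{0} → Sym2 (A ⊕ B)) (γ : Ordinal.{0}) :
    #(Cl c γ) ≤ γ.card := by
  have hrange : Cl c γ = Set.range (fun i : γ.ToType => c (idx γ i)) := by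
    ext e
    rw [mem_Cl]
    constructor
    · rintro ⟨β, hβ, rfl⟩
      obtain ⟨i, rfl⟩ := idx_surj hβ
      exact ⟨i, rfl⟩
    · rintro ⟨i, rfl⟩
      exact ⟨idx γ i, idx_lt i, rfl⟩
  rw [hrange]
  exact (Cardinal.mk_range_le).trans_eq (Cardinal.mk_toType γ)

/-! ### Parity and arithmetic of turns -/

theorem omega0_mul_eq_two_mul (α : Ordinal.{0}) : ω * α = 2 * (ω * α) := by
  conv_lhs => rw [← Ordinal.mul_omega0 (a := 2) (by norm_num) (Ordinal.nat_lt_omega0 2)]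
  rw [mul_assoc]

theorem makerTurn_omega_mul_add (α : Ordinal.{0}) (n : ℕ) :
    makerTurn (ω * α + n) ↔ n % 2 = 0 := by
  unfold makerTurn
  have h1 : (ω * α + (n : Ordinal)) % 2 = ((n % 2 : ℕ) : Ordinal) := by
    conv_lhs => rw [omega0_mul_eq_two_mul α]
    rw [Ordinal.mul_add_mod_self]
    rw [Ordinal.natCast_mod]
    norm_num
  rw [h1]
  exact Nat.cast_eq_zero

theorem turn_decomp {α δ β : Ordinal.{0}} (h1 : ω * α ≤ β) (h2 : β < ω * α + δ) :
    ∃ m < δ, β = ω * α + m := by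
  refine ⟨β - ω * α, ?_, (Ordinal.add_sub_cancel_of_le h1).symm⟩
  rw [← Ordinal.add_sub_cancel_of_le h1] at h2
  exact (add_lt_add_iff_left _).mp h2

theorem omega_mul_add_div (α : Ordinal.{0}) (n : ℕ) : (ω * α + n) / ω = α := by
  rw [Ordinal.mul_add_div _ Ordinal.omega0_ne_zero,
    Ordinal.div_eq_zero_of_lt (Ordinal.nat_lt_omega0 n), add_zero]

theorem omega_mul_add_lt {κ : Cardinal.{0}} (hκ : ℵ₀ < κ) {α : Ordinal.{0}}
    (hα : α < κ.ord) (n : ℕ) : ω * α + n < κ.ord := by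
  rw [Cardinal.lt_ord] at hα ⊢
  rw [Ordinal.card_add, Ordinal.card_mul, Ordinal.card_omega0, Ordinal.card_nat]
  exact Cardinal.add_lt_of_lt hκ.le
    (Cardinal.mul_lt_of_lt hκ.le hκ hα)
    ((Cardinal.nat_lt_aleph0 n).trans hκ)

/-! ### The column chooser and the reservoirs -/

/-- The column (vertex of `B`) Maker uses during round `α`: some vertex all of
whose edges are unclaimed at the start of the round. -/
def colFn (eA : A ≃ ℕ) (hB : Nonempty B) (c : Ordinal.{0} → Sym2 (A ⊕ B))
    (α : Ordinal.{0}) : B :=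
  if h : ∃ b : B, ∀ a : ℕ, edg eA a b ∉ Cl c (ω * α) then h.choose else hB.some

theorem colFn_spec {eA : A ≃ ℕ} {hB : Nonempty B} {c : Ordinal.{0} → Sym2 (A ⊕ B)}
    {α : Ordinal.{0}} (hcard : #(Cl c (ω * α)) < #B) :
    ∀ a : ℕ, edg eA a (colFn eA hB c α) ∉ Cl c (ω * α) := by
  have h : ∃ b : B, ∀ a : ℕ, edg eA a b ∉ Cl c (ω * α) := by
    by_contra hc
    push_neg at hc
    have hinj : Function.Injective
        (fun b : B => (⟨edg eA (hc b).choose b, (hc b).choose_spec⟩ : Cl c (ω * α))) := by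
      intro b b' hbb
      exact (edg_inj (congrArg Subtype.val hbb)).2
    exact absurd hcard (not_lt.mpr (Cardinal.mk_le_of_injective hinj))
  rw [colFn, dif_pos h]
  exact h.choose_spec

theorem colFn_congr {eA : A ≃ ℕ} {hB : Nonempty B} {c c' : Ordinal.{0} → Sym2 (A ⊕ B)}
    {α : Ordinal.{0}} (h : ∀ β < ω * α, c β = c' β) :
    colFn eA hB c α = colFn eA hB c' α := by
  unfold colFn
  rw [Cl_congr h]

/-- The set of `a : ℕ` such that Maker claimed the edge from `a` to the column
of round `β` during round `β` (i.e. at a Maker turn in `[ω·β, ω·β+ω)`). -/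
def Dcol (eA : A ≃ ℕ) (hB : Nonempty B) (c : Ordinal.{0} → Sym2 (A ⊕ B))
    (β : Ordinal.{0}) : Set ℕ :=
  {a | ∃ τ, ω * β ≤ τ ∧ τ < ω * β + ω ∧ makerTurn τ ∧ c τ = edg eA a (colFn eA hB c β)}

theorem omega_mul_succ_le {β α : Ordinal.{0}} (h : β < α) : ω * β + ω ≤ ω * α := by
  have h1 : ω * β + ω = ω * (β + 1) := by
    rw [Ordinal.add_one_eq_succ, Ordinal.mul_succ]
  rw [h1]
  exact mul_le_mul_right (by rwa [Ordinal.add_one_eq_succ, Order.succ_le_iff]) ω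

theorem Dcol_congr {eA : A ≃ ℕ} {hB : Nonempty B} {c c' : Ordinal.{0} → Sym2 (A ⊕ B)}
    {β : Ordinal.{0}} (h : ∀ τ < ω * β + ω, c τ = c' τ) :
    Dcol eA hB c β = Dcol eA hB c' β := by
  have hc : colFn eA hB c β = colFn eA hB c' β :=
    colFn_congr (fun τ hτ => h τ (hτ.trans_le le_self_add))
  unfold Dcol
  rw [hc]
  ext a
  constructor <;> rintro ⟨τ, h1, h2, h3, h4⟩
  · exact ⟨τ, h1, h2, h3, by rw [← h τ h2]; exact h4⟩
  · exact ⟨τ, h1, h2, h3, by rw [h τ h2]; exact h4⟩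

/-- The family of sets built at rounds before `α`. -/
def limF (eA : A ≃ ℕ) (hB : Nonempty B) (c : Ordinal.{0} → Sym2 (A ⊕ B))
    (α : Ordinal.{0}) : Set (Set ℕ) :=
  {S | ∃ β < α, S = Dcol eA hB c β}

theorem limF_congr {eA : A ≃ ℕ} {hB : Nonempty B} {c c' : Ordinal.{0} → Sym2 (A ⊕ B)}
    {α : Ordinal.{0}} (h : ∀ τ < ω * α, c τ = c' τ) :
    limF eA hB c α = limF eA hB c' α := by
  have hD : ∀ β < α, Dcol eA hB c β = Dcol eA hB c' β := fun β hβ =>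
    Dcol_congr (fun τ hτ => h τ (hτ.trans_le (omega_mul_succ_le hβ)))
  ext S
  constructor <;> rintro ⟨β, hβ, rfl⟩
  · exact ⟨β, hβ, hD β hβ⟩
  · exact ⟨β, hβ, (hD β hβ).symm⟩

theorem succ_cancel {x y : Ordinal.{0}} (h : x + 1 = y + 1) : x = y := by
  have key : ∀ u v : Ordinal.{0}, u + 1 = v + 1 → u ≤ v := by
    intro u v huv
    have h1 : u < u + 1 := by
      rw [Ordinal.add_one_eq_succ]; exact Order.lt_succ u
    rw [huv, Ordinal.add_one_eq_succ, Order.lt_succ_iff] at h1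
    exact h1
  exact le_antisymm (key _ _ h) (key _ _ h.symm)

variable (κ : Cardinal.{0})

/-- A choice of pseudo-intersection for a suitable family. -/
def pseudoInt (hp : ∀ F : Set (Set ℕ), (∀ A ∈ F, A.Infinite) → #F ≤ κ → HasSFIP F →
      ∃ P : Set ℕ, P.Infinite ∧ ∀ A ∈ F, (P \ A).Finite) (F : Set (Set ℕ)) : Set ℕ :=
  if h2 : (∀ X ∈ F, X.Infinite) ∧ #F ≤ κ ∧ HasSFIP F then (hp F h2.1 h2.2.1 h2.2.2).choose
  else Set.univ

/-- The reservoir of round `α`: at round `0` everything, at a successor round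
the set built in the previous round, at limit rounds a pseudo-intersection of
the sets built at all earlier rounds. -/
def Res (hp : ∀ F : Set (Set ℕ), (∀ A ∈ F, A.Infinite) → #F ≤ κ → HasSFIP F →
      ∃ P : Set ℕ, P.Infinite ∧ ∀ A ∈ F, (P \ A).Finite)
    (eA : A ≃ ℕ) (hB : Nonempty B) (c : Ordinal.{0} → Sym2 (A ⊕ B))
    (α : Ordinal.{0}) : Set ℕ :=
  if α = 0 then Set.univ
  else if h : ∃ β, α = β + 1 then Dcol eA hB c h.choose
  else pseudoInt κ hp (limF eA hB c α)

variable {hp : ∀ F : Set (Set ℕ), (∀ A ∈ F, A.Infinite) → #F ≤ κ → HasSFIP F →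
      ∃ P : Set ℕ, P.Infinite ∧ ∀ A ∈ F, (P \ A).Finite}
  {eA : A ≃ ℕ} {hB : Nonempty B}

theorem Res_zero {c : Ordinal.{0} → Sym2 (A ⊕ B)} : Res κ hp eA hB c 0 = Set.univ :=
  if_pos rfl

theorem Res_succ {c : Ordinal.{0} → Sym2 (A ⊕ B)} (β : Ordinal.{0}) :
    Res κ hp eA hB c (β + 1) = Dcol eA hB c β := by
  have h0 : β + 1 ≠ 0 := by
    rw [Ordinal.add_one_eq_succ]
    exact (Order.succ_ne_bot β)
  have hs : ∃ β', β + 1 = β' + 1 := ⟨β, rfl⟩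
  rw [Res, if_neg h0, dif_pos hs]
  exact congrArg (Dcol eA hB c) (succ_cancel hs.choose_spec.symm)

theorem Res_limit {c : Ordinal.{0} → Sym2 (A ⊕ B)} {α : Ordinal.{0}}
    (h0 : α ≠ 0) (hs : ¬∃ β, α = β + 1)
    (h2 : (∀ X ∈ limF eA hB c α, X.Infinite) ∧ #(limF eA hB c α) ≤ κ ∧
      HasSFIP (limF eA hB c α)) :
    (Res κ hp eA hB c α).Infinite ∧ ∀ X ∈ limF eA hB c α, (Res κ hp eA hB c α \ X).Finite := by
  rw [Res, if_neg h0, dif_neg hs, pseudoInt, dif_pos h2]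
  exact (hp _ h2.1 h2.2.1 h2.2.2).choose_spec

theorem Res_congr {c c' : Ordinal.{0} → Sym2 (A ⊕ B)} {α : Ordinal.{0}}
    (h : ∀ β < ω * α, c β = c' β) :
    Res κ hp eA hB c α = Res κ hp eA hB c' α := by
  by_cases h0 : α = 0
  · subst h0; rw [Res_zero, Res_zero]
  by_cases hs : ∃ β, α = β + 1
  · obtain ⟨β, rfl⟩ := hs
    rw [Res_succ, Res_succ]
    exact Dcol_congr (fun τ hτ => h τ (hτ.trans_le (omega_mul_succ_le
      (by rw [Ordinal.add_one_eq_succ]; exact Order.lt_succ β))))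
  · have hF : limF eA hB c α = limF eA hB c' α := limF_congr h
    rw [Res, Res, if_neg h0, if_neg h0, dif_neg hs, dif_neg hs]
    rw [hF]
/-! ### SFIP for almost-decreasing chains -/

theorem sfip_chain {D : Ordinal.{0} → Set ℕ} {o : Ordinal.{0}}
    (h1 : ∀ β < o, (D β).Infinite)
    (h2 : ∀ β γ, β ≤ γ → γ < o → (D γ \ D β).Finite) :
    HasSFIP {S | ∃ β < o, S = D β} := by
  intro S hS
  rcases S.eq_empty_or_nonempty with rfl | hne
  · simpa using Set.infinite_univ
  · have key : ∀ T : Finset (Set ℕ), T.Nonempty →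
        (↑T ⊆ {S | ∃ β < o, S = D β}) → ∃ γ, γ < o ∧ ∀ X ∈ T, (D γ \ X).Finite := by
      intro T hTne
      induction hTne using Finset.Nonempty.cons_induction with
      | singleton X =>
        intro hsub
        obtain ⟨β, hβ, rfl⟩ := hsub (Finset.mem_singleton_self X)
        refine ⟨β, hβ, ?_⟩
        intro Y hY
        rw [Finset.mem_singleton] at hY
        subst hY
        simp
      | cons X T hX hTne IH =>
        intro hsub
        obtain ⟨β, hβ, rfl⟩ := hsub (Finset.mem_cons_self X T)
        obtain ⟨γ, hγ, hall⟩ := IH (fun Y hY => hsub (Finset.mem_cons_of_mem hY))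
        refine ⟨max β γ, max_lt hβ hγ, ?_⟩
        intro Y hY
        rcases Finset.mem_cons.mp hY with rfl | hY'
        · exact h2 β (max β γ) (le_max_left β γ) (max_lt hβ hγ)
        · refine Set.Finite.subset ((h2 γ (max β γ) (le_max_right β γ) (max_lt hβ hγ)).union
            (hall Y hY')) ?_
          intro a ⟨ha1, ha2⟩
          by_cases hg : a ∈ D γ
          · exact Or.inr ⟨hg, ha2⟩
          · exact Or.inl ⟨ha1, hg⟩
    obtain ⟨γ, hγ, hall⟩ := key S hne hS
    have hsub : (D γ \ ⋃ X ∈ S, (D γ \ X)) ⊆ ⋂₀ (↑S : Set (Set ℕ)) := by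
      intro a ha X hX
      by_contra hax
      exact ha.2 (Set.mem_biUnion hX ⟨ha.1, hax⟩)
    exact Set.Infinite.mono hsub ((h1 γ hγ).diff
      ((S.finite_toSet).biUnion (fun X hX => hall X hX)))

/-! ### The strategy -/

/-- Extension of a history to a total function on ordinals. -/
def extH (eA : A ≃ ℕ) (γ : Ordinal.{0}) (hist : ∀ β : Ordinal.{0}, β < γ → Sym2 (A ⊕ B)) :
    Ordinal.{0} → Sym2 (A ⊕ B) :=
  fun β => if h : β < γ then hist β h else junk eA

/-- The set of good choices at turn `γ`: elements of the current round's
reservoir whose edge to the current round's column is still unclaimed. -/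
def goodSet (hp : ∀ F : Set (Set ℕ), (∀ A ∈ F, A.Infinite) → #F ≤ κ → HasSFIP F →
      ∃ P : Set ℕ, P.Infinite ∧ ∀ A ∈ F, (P \ A).Finite)
    (eA : A ≃ ℕ) (hB : Nonempty B) (γ : Ordinal.{0})
    (c : Ordinal.{0} → Sym2 (A ⊕ B)) : Set ℕ :=
  {a : ℕ | a ∈ Res κ hp eA hB c (γ / ω) ∧ edg eA a (colFn eA hB c (γ / ω)) ∉ Cl c γ}

/-- The move Maker intends to make at turn `γ`. -/
def intended (hp : ∀ F : Set (Set ℕ), (∀ A ∈ F, A.Infinite) → #F ≤ κ → HasSFIP F →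
      ∃ P : Set ℕ, P.Infinite ∧ ∀ A ∈ F, (P \ A).Finite)
    (eA : A ≃ ℕ) (hB : Nonempty B) (γ : Ordinal.{0})
    (c : Ordinal.{0} → Sym2 (A ⊕ B)) : Sym2 (A ⊕ B) :=
  edg eA (sInf (goodSet κ hp eA hB γ c)) (colFn eA hB c (γ / ω))

/-- Maker's strategy. -/
def strat (hp : ∀ F : Set (Set ℕ), (∀ A ∈ F, A.Infinite) → #F ≤ κ → HasSFIP F →
      ∃ P : Set ℕ, P.Infinite ∧ ∀ A ∈ F, (P \ A).Finite)
    (eA : A ≃ ℕ) (hB : Nonempty B) : MBStrategy (Sym2 (A ⊕ B)) := fun γ hist =>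
  if intended κ hp eA hB γ (extH eA γ hist) ∈ (completeBipartiteGraph A B).edgeSet ∧
      (∀ β hh, hist β hh ≠ intended κ hp eA hB γ (extH eA γ hist)) then
    intended κ hp eA hB γ (extH eA γ hist)
  else if h2 : ∃ e ∈ (completeBipartiteGraph A B).edgeSet, ∀ β hh, hist β hh ≠ e then
    h2.choose
  else junk eA

theorem strat_legal (hp : ∀ F : Set (Set ℕ), (∀ A ∈ F, A.Infinite) → #F ≤ κ → HasSFIP F →
      ∃ P : Set ℕ, P.Infinite ∧ ∀ A ∈ F, (P \ A).Finite)
    (eA : A ≃ ℕ) (hB : Nonempty B) :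
    (strat κ hp eA hB).IsLegal (completeBipartiteGraph A B).edgeSet makerTurn := by
  intro γ hist _ _ _ hex
  rw [strat]
  by_cases h : intended κ hp eA hB γ (extH eA γ hist) ∈ (completeBipartiteGraph A B).edgeSet ∧
      (∀ β hh, hist β hh ≠ intended κ hp eA hB γ (extH eA γ hist))
  · rw [if_pos h]
    exact h
  · rw [if_neg h, dif_pos hex]
    exact ⟨hex.choose_spec.1, hex.choose_spec.2⟩
/-! ### Maker wins -/

theorem strat_wins (hcf : ℵ₀ < κ.ord.cof)
    (hp : ∀ F : Set (Set ℕ), (∀ A ∈ F, A.Infinite) → #F ≤ κ → HasSFIP F →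
      ∃ P : Set ℕ, P.Infinite ∧ ∀ A ∈ F, (P \ A).Finite)
    (eA : A ≃ ℕ) (hB : Nonempty B) (hBc : #B = κ)
    (p : MBPlay (completeBipartiteGraph A B).edgeSet)
    (hf : p.Follows makerTurn (strat κ hp eA hB)) :
    ContainsCopy (SimpleGraph.fromEdgeSet (p.claimed makerTurn)) (completeBipartiteGraph A B) := by
  classical
  have hκ : ℵ₀ < κ := hcf.trans_le (Ordinal.cof_ord_le κ)
  -- the total move function
  set c : Ordinal.{0} → Sym2 (A ⊕ B) :=
    fun β => if h : β < p.len then p.move β h else junk eA with hcdef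
  have hcmove : ∀ β (h : β < p.len), c β = p.move β h := fun β h => dif_pos h
  have hclen : ∀ τ a b, c τ = edg eA a b → τ < p.len := by
    intro τ a b h
    by_contra hn
    rw [hcdef] at h
    simp only [dif_neg hn] at h
    exact edg_ne_junk eA a b h.symm
  -- the play is long enough
  have hlen : κ.ord ≤ p.len := by
    rw [Cardinal.ord_le, ← hBc]
    have h1 : #B ≤ #(↥(completeBipartiteGraph A B).edgeSet) := by
      refine Cardinal.mk_le_of_injective
        (f := fun b => (⟨edg eA 0 b, ?_⟩ : ↥(completeBipartiteGraph A B).edgeSet)) ?_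
      · rw [edg, SimpleGraph.mem_edgeSet]
        simp [completeBipartiteGraph_adj]
      · intro b b' hbb
        exact (edg_inj (congrArg Subtype.val hbb)).2
    have h2 : #(↥(completeBipartiteGraph A B).edgeSet) ≤ p.len.card := by
      rw [← Cardinal.mk_toType]
      refine Cardinal.mk_le_of_surjective
        (f := fun i => (⟨p.move (idx p.len i) (idx_lt i), p.move_mem _ _⟩ :
          ↥(completeBipartiteGraph A B).edgeSet)) ?_
      rintro ⟨e, he⟩
      obtain ⟨γ, hγ, hmv⟩ := p.complete e he
      obtain ⟨i, hi⟩ := idx_surj hγ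
      refine ⟨i, Subtype.ext ?_⟩
      show p.move (idx p.len i) (idx_lt i) = e
      subst hi
      exact hmv
    exact h1.trans h2
  -- untouched columns
  have huntouched : ∀ α < κ.ord, ∀ a : ℕ, edg eA a (colFn eA hB c α) ∉ Cl c (ω * α) := by
    intro α hα
    refine colFn_spec ?_
    rw [hBc]
    refine lt_of_le_of_lt (mk_Cl_le c _) ?_
    have := omega_mul_add_lt hκ hα 0
    rw [Nat.cast_zero, add_zero] at this
    exact Cardinal.lt_ord.mp this
  -- round execution
  have hround : ∀ α, α < κ.ord → (Res κ hp eA hB c α).Infinite → ∀ n : ℕ,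
      ∃ a : ℕ, a ∈ Res κ hp eA hB c α ∧
        edg eA a (colFn eA hB c α) ∉ Cl c (ω * α + (2 * n : ℕ)) ∧
        c (ω * α + (2 * n : ℕ)) = edg eA a (colFn eA hB c α) := by
    intro α hα hinf n
    have hγκ : ω * α + ((2 * n : ℕ) : Ordinal) < κ.ord := omega_mul_add_lt hκ hα (2 * n)
    have hγlen : ω * α + ((2 * n : ℕ) : Ordinal) < p.len := hγκ.trans_le hlen
    have hmk : makerTurn (ω * α + ((2 * n : ℕ) : Ordinal)) :=
      (makerTurn_omega_mul_add α (2 * n)).mpr (by omega)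
    have hmove := hf _ hγlen hmk
    set hist : ∀ β : Ordinal.{0}, β < ω * α + ((2 * n : ℕ) : Ordinal) → Sym2 (A ⊕ B) :=
      fun β hβ => p.move β (hβ.trans hγlen) with hhist
    have hagree : ∀ β < ω * α + ((2 * n : ℕ) : Ordinal), extH eA _ hist β = c β := by
      intro β hβ
      rw [extH, dif_pos hβ, hhist]
      exact (hcmove β (hβ.trans hγlen)).symm
    have hdiv : (ω * α + ((2 * n : ℕ) : Ordinal)) / ω = α := omega_mul_add_div α (2 * n)
    have hagree' : ∀ β < ω * α, extH eA (ω * α + ((2 * n : ℕ) : Ordinal)) hist β = c β :=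
      fun β hβ => hagree β (hβ.trans_le le_self_add)
    have hcol : colFn eA hB (extH eA (ω * α + ((2 * n : ℕ) : Ordinal)) hist) α
        = colFn eA hB c α := colFn_congr hagree'
    have hres : Res κ hp eA hB (extH eA (ω * α + ((2 * n : ℕ) : Ordinal)) hist) α
        = Res κ hp eA hB c α := Res_congr κ hagree'
    have hCl : Cl (extH eA (ω * α + ((2 * n : ℕ) : Ordinal)) hist) (ω * α + ((2 * n : ℕ) : Ordinal))
        = Cl c (ω * α + ((2 * n : ℕ) : Ordinal)) := Cl_congr hagree
    -- the set of good choices is infinite, hence nonempty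
    have hbad : {a : ℕ | edg eA a (colFn eA hB c α) ∈ Cl c (ω * α + ((2 * n : ℕ) : Ordinal))}.Finite := by
      have hsub : {a : ℕ | edg eA a (colFn eA hB c α) ∈ Cl c (ω * α + ((2 * n : ℕ) : Ordinal))} ⊆
          ⋃ k ∈ Finset.range (2 * n), {a : ℕ | c (ω * α + (k : ℕ)) = edg eA a (colFn eA hB c α)} := by
        intro a ha
        rw [Set.mem_setOf_eq, mem_Cl] at ha
        obtain ⟨β, hβ, hcβ⟩ := ha
        have hge : ω * α ≤ β := by
          by_contra hltβ
          push_neg at hltβ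
          exact huntouched α hα a (mem_Cl.mpr ⟨β, hltβ, hcβ⟩)
        obtain ⟨m, hm, rfl⟩ := turn_decomp hge hβ
        obtain ⟨k, rfl⟩ := Ordinal.lt_omega0.mp (hm.trans (Ordinal.nat_lt_omega0 _))
        have hk : k < 2 * n := by exact_mod_cast hm
        exact Set.mem_biUnion (Finset.mem_range.mpr hk) hcβ
      refine Set.Finite.subset (Set.Finite.biUnion (Finset.range (2 * n)).finite_toSet
        (fun k _ => ?_)) hsub
      refine Set.Subsingleton.finite ?_
      intro a ha a' ha'
      exact (edg_inj ((ha.symm).trans ha')).1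
    have hTinf : (goodSet κ hp eA hB (ω * α + ((2 * n : ℕ) : Ordinal)) c).Infinite := by
      have : goodSet κ hp eA hB (ω * α + ((2 * n : ℕ) : Ordinal)) c =
          (Res κ hp eA hB c α) \
            {a : ℕ | edg eA a (colFn eA hB c α) ∈ Cl c (ω * α + ((2 * n : ℕ) : Ordinal))} := by
        rw [goodSet, hdiv]
        rfl
      rw [this]
      exact hinf.diff hbad
    have ha0 := Nat.sInf_mem hTinf.nonempty
    have ha0' : sInf (goodSet κ hp eA hB (ω * α + ((2 * n : ℕ) : Ordinal)) c) ∈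
          Res κ hp eA hB c ((ω * α + ((2 * n : ℕ) : Ordinal)) / ω) ∧
        edg eA (sInf (goodSet κ hp eA hB (ω * α + ((2 * n : ℕ) : Ordinal)) c))
          (colFn eA hB c ((ω * α + ((2 * n : ℕ) : Ordinal)) / ω)) ∉
          Cl c (ω * α + ((2 * n : ℕ) : Ordinal)) := ha0
    rw [hdiv] at ha0'
    -- the intended move
    have hint : intended κ hp eA hB (ω * α + ((2 * n : ℕ) : Ordinal))
        (extH eA (ω * α + ((2 * n : ℕ) : Ordinal)) hist)
        = edg eA (sInf (goodSet κ hp eA hB (ω * α + ((2 * n : ℕ) : Ordinal)) c))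
            (colFn eA hB c α) := by
      rw [intended, goodSet, goodSet, hdiv, hres, hcol, hCl]
    have hmem : edg eA (sInf (goodSet κ hp eA hB (ω * α + ((2 * n : ℕ) : Ordinal)) c))
        (colFn eA hB c α) ∈ (completeBipartiteGraph A B).edgeSet := by
      rw [edg, SimpleGraph.mem_edgeSet]
      simp [completeBipartiteGraph_adj]
    have hfresh : ∀ β (hh : β < ω * α + ((2 * n : ℕ) : Ordinal)),
        hist β hh ≠ edg eA (sInf (goodSet κ hp eA hB (ω * α + ((2 * n : ℕ) : Ordinal)) c))
          (colFn eA hB c α) := by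
      intro β hh heq
      refine ha0'.2 (mem_Cl.mpr ⟨β, hh, ?_⟩)
      rw [hcmove β (hh.trans hγlen)]
      exact heq
    rw [strat] at hmove
    rw [hint] at hmove
    rw [if_pos ⟨hmem, hfresh⟩] at hmove
    refine ⟨sInf (goodSet κ hp eA hB (ω * α + ((2 * n : ℕ) : Ordinal)) c), ha0'.1, ha0'.2, ?_⟩
    rw [hcmove _ hγlen, hmove]

  -- the set built at each round is infinite and inside the reservoir,
  -- and reservoirs almost-shrink
  have Qall : ∀ α, α < κ.ord →
      ((Res κ hp eA hB c α).Infinite ∧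
        ∀ β < α, ((Res κ hp eA hB c α) \ Dcol eA hB c β).Finite) ∧
      ((Dcol eA hB c α).Infinite ∧ Dcol eA hB c α ⊆ Res κ hp eA hB c α) := by
    intro α
    induction α using Ordinal.induction with
    | _ α IH =>
    intro hα
    have part1 : (Res κ hp eA hB c α).Infinite ∧
        ∀ β < α, ((Res κ hp eA hB c α) \ Dcol eA hB c β).Finite := by
      by_cases h0 : α = 0
      · subst h0
        rw [Res_zero κ]
        exact ⟨Set.infinite_univ, fun β hβ => absurd hβ (not_lt_of_ge (zero_le (a := β)))⟩
      by_cases hsucc : ∃ β, α = β + 1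
      · obtain ⟨β₀, rfl⟩ := hsucc
        have hβ₀ : β₀ < β₀ + 1 := by rw [Ordinal.add_one_eq_succ]; exact Order.lt_succ β₀
        have hQ := IH β₀ hβ₀ (hβ₀.trans hα)
        rw [Res_succ κ β₀]
        refine ⟨hQ.2.1, ?_⟩
        intro β hβ
        have hle : β ≤ β₀ := by rw [Ordinal.add_one_eq_succ, Order.lt_succ_iff] at hβ; exact hβ
        rcases eq_or_lt_of_le hle with rfl | hlt
        · rw [Set.diff_self]; exact Set.finite_empty
        · exact (hQ.1.2 β hlt).subset (Set.diff_subset_diff_left hQ.2.2)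
      · have hlim : (∀ X ∈ limF eA hB c α, X.Infinite) ∧ #(limF eA hB c α) ≤ κ ∧
            HasSFIP (limF eA hB c α) := by
          refine ⟨?_, ?_, ?_⟩
          · rintro X ⟨β, hβ, rfl⟩
            exact (IH β hβ (hβ.trans hα)).2.1
          · have hrange : limF eA hB c α =
                Set.range (fun i : α.ToType => Dcol eA hB c (idx α i)) := by
              ext S
              constructor
              · rintro ⟨β, hβ, rfl⟩
                obtain ⟨i, rfl⟩ := idx_surj hβ
                exact ⟨i, rfl⟩
              · rintro ⟨i, rfl⟩
                exact ⟨idx α i, idx_lt i, rfl⟩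
            rw [hrange]
            exact Cardinal.mk_range_le.trans
              ((Cardinal.mk_toType α).trans_le (Cardinal.lt_ord.mp hα).le)
          · exact sfip_chain (fun β hβ => (IH β hβ (hβ.trans hα)).2.1)
              (fun β γ' hle hγ' => by
                rcases eq_or_lt_of_le hle with rfl | hlt
                · rw [Set.diff_self]; exact Set.finite_empty
                · exact ((IH γ' hγ' (hγ'.trans hα)).1.2 β hlt).subset
                    (Set.diff_subset_diff_left (IH γ' hγ' (hγ'.trans hα)).2.2))
        obtain ⟨hinfR, hfinR⟩ := Res_limit κ h0 hsucc hlim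
        exact ⟨hinfR, fun β hβ => hfinR _ ⟨β, hβ, rfl⟩⟩
    have hex := hround α hα part1.1
    have hsub : Dcol eA hB c α ⊆ Res κ hp eA hB c α := by
      rintro x ⟨τ, hτ1, hτ2, hτmk, hτeq⟩
      obtain ⟨m, hm, rfl⟩ := turn_decomp hτ1 hτ2
      obtain ⟨k, rfl⟩ := Ordinal.lt_omega0.mp hm
      have hk2 : k % 2 = 0 := (makerTurn_omega_mul_add α k).mp hτmk
      obtain ⟨j, rfl⟩ : ∃ j, k = 2 * j := ⟨k / 2, by omega⟩
      obtain ⟨a, haR, -, haeq⟩ := hex j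
      have hxa : x = a := (edg_inj (hτeq.symm.trans haeq)).1
      rw [hxa]
      exact haR
    have haneq : ∀ m n' : ℕ, m < n' → (hex m).choose ≠ (hex n').choose := by
      intro m n' hmn heq
      have h1 := (hex m).choose_spec.2.2
      have h2 := (hex m).choose_spec.2.1
      have h3 := (hex n').choose_spec.2.1
      refine h3 (mem_Cl.mpr ⟨ω * α + ((2 * m : ℕ) : Ordinal), ?_, ?_⟩)
      · refine add_lt_add_right ?_ (ω * α)
        exact_mod_cast (by omega : 2 * m < 2 * n')
      · rw [h1, heq]
    have hDinf : (Dcol eA hB c α).Infinite := by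
      refine Set.infinite_of_injective_forall_mem (f := fun n => (hex n).choose) ?_ ?_
      · intro m n' h
        by_contra hne
        rcases Nat.lt_or_ge m n' with h1 | h1
        · exact haneq m n' h1 h
        · have h1' : n' < m := by omega
          exact haneq n' m h1' h.symm
      · intro n
        exact ⟨ω * α + ((2 * n : ℕ) : Ordinal), le_self_add,
          add_lt_add_right (Ordinal.nat_lt_omega0 _) _,
          (makerTurn_omega_mul_add α (2 * n)).mpr (by omega), (hex n).choose_spec.2.2⟩
    exact ⟨part1, hDinf, hsub⟩

  -- distinct rounds use distinct columns
  have hcolinj : ∀ β α', β < α' → α' < κ.ord →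
      colFn eA hB c α' ≠ colFn eA hB c β := by
    intro β α' hβ hα' hEq
    obtain ⟨a, ⟨τ, hτ1, hτ2, -, hτeq⟩⟩ := (Qall β (hβ.trans hα')).2.1.nonempty
    refine huntouched α' hα' a (mem_Cl.mpr ⟨τ, ?_, ?_⟩)
    · exact hτ2.trans_le (omega_mul_succ_le hβ)
    · rw [hτeq, hEq]
  -- endgame
  -- the family of all built sets has a pseudo-intersection
  have hFamext : Set.range (fun i : κ.ord.ToType => Dcol eA hB c (idx κ.ord i)) =
      {S | ∃ β < κ.ord, S = Dcol eA hB c β} := by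
    ext S
    constructor
    · rintro ⟨i, rfl⟩
      exact ⟨idx κ.ord i, idx_lt i, rfl⟩
    · rintro ⟨β, hβ, rfl⟩
      obtain ⟨i, rfl⟩ := idx_surj hβ
      exact ⟨i, rfl⟩
  obtain ⟨P, hPinf, hPfin⟩ :=
    hp (Set.range (fun i : κ.ord.ToType => Dcol eA hB c (idx κ.ord i)))
      (by rintro X ⟨i, rfl⟩; exact (Qall _ (idx_lt i)).2.1)
      (Cardinal.mk_range_le.trans (by rw [Cardinal.mk_toType, Cardinal.card_ord]))
      (by
        rw [hFamext]
        exact sfip_chain (fun β hβ => (Qall β hβ).2.1)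
          (fun β γ' hle hγ' => by
            rcases eq_or_lt_of_le hle with rfl | hlt
            · rw [Set.diff_self]; exact Set.finite_empty
            · exact ((Qall γ' hγ').1.2 β hlt).subset
                (Set.diff_subset_diff_left (Qall γ' hγ').2.2)))
  have hPD : ∀ i : κ.ord.ToType, (P \ Dcol eA hB c (idx κ.ord i)).Finite :=
    fun i => hPfin _ ⟨i, rfl⟩
  set g : κ.ord.ToType → Finset ℕ := fun i => (hPD i).toFinset with hg
  -- some fiber of `g` has size `κ` (uses uncountable cofinality)
  have hfib : ∃ s : Finset ℕ, κ ≤ #(↥(g ⁻¹' {s})) := by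
    by_contra hcon
    push_neg at hcon
    have h1 : #(κ.ord.ToType) = κ := by rw [Cardinal.mk_toType, Cardinal.card_ord]
    have h2 : #(κ.ord.ToType) = Cardinal.sum (fun s : Finset ℕ => #(↥(g ⁻¹' {s}))) := by
      rw [← Cardinal.mk_sigma]
      refine Cardinal.mk_congr ?_
      have e1 := Equiv.sigmaFiberEquiv g
      have e2 : ((s : Finset ℕ) × ↥(g ⁻¹' {s})) ≃ ((s : Finset ℕ) × {i // g i = s}) :=
        Equiv.sigmaCongrRight (fun s => Equiv.subtypeEquivRight (fun i => by
          simp [Set.mem_preimage]))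
      exact (e1.symm.trans e2.symm)
    have h3 := Cardinal.sum_le_mk_mul_iSup (fun s : Finset ℕ => #(↥(g ⁻¹' {s})))
    have h4 : iSup (fun s : Finset ℕ => #(↥(g ⁻¹' {s}))) < κ :=
      Ordinal.iSup_lt (lt_of_le_of_lt Cardinal.mk_le_aleph0 hcf) hcon
    have h5 : #(Finset ℕ) * iSup (fun s : Finset ℕ => #(↥(g ⁻¹' {s}))) < κ :=
      Cardinal.mul_lt_of_lt hκ.le (lt_of_le_of_lt Cardinal.mk_le_aleph0 hκ) h4
    have hchain : κ ≤ #(Finset ℕ) * iSup (fun s : Finset ℕ => #(↥(g ⁻¹' {s}))) :=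
      ((h1.symm.trans h2).le).trans h3
    exact absurd (hchain.trans_lt h5) (lt_irrefl κ)
  obtain ⟨s₀, hs₀⟩ := hfib
  obtain ⟨embB⟩ : Nonempty (B ↪ ↥(g ⁻¹' {s₀})) := by
    rw [← Cardinal.le_def, hBc]
    exact hs₀
  have hSinf : (P \ ↑s₀).Infinite := hPinf.diff s₀.finite_toSet
  set natE : ℕ ↪ ↥(P \ ↑s₀) := Set.Infinite.natEmbedding _ hSinf with hnatE
  have hginv : ∀ b : B, g ((embB b : ↥(g ⁻¹' {s₀})) : κ.ord.ToType) = s₀ := by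
    intro b
    exact (embB b).2
  have hkey : ∀ i : κ.ord.ToType, g i = s₀ → ∀ a : ℕ, a ∈ P \ ↑s₀ →
      a ∈ Dcol eA hB c (idx κ.ord i) := by
    intro i hgi a ha
    by_contra hna
    have h1 : a ∈ (hPD i).toFinset := (hPD i).mem_toFinset.mpr ⟨ha.1, hna⟩
    rw [show (hPD i).toFinset = g i from rfl, hgi] at h1
    exact ha.2 h1
  set fV : A ⊕ B → A ⊕ B := Sum.map
    (fun a => eA.symm ((natE (eA a) : ↥(P \ ↑s₀)) : ℕ))
    (fun b => colFn eA hB c (idx κ.ord ((embB b : ↥(g ⁻¹' {s₀})) : κ.ord.ToType))) with hfV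
  have hAdj : ∀ (a : A) (b : B),
      (SimpleGraph.fromEdgeSet (p.claimed makerTurn)).Adj (fV (Sum.inl a)) (fV (Sum.inr b)) := by
    intro a b
    rw [SimpleGraph.fromEdgeSet_adj]
    constructor
    · have haD := hkey _ (hginv b) _ (natE (eA a)).2
      obtain ⟨τ, hτ1, hτ2, hτmk, hτeq⟩ := haD
      have hτlen : τ < p.len := hclen τ _ _ hτeq
      refine ⟨τ, hτlen, hτmk, ?_⟩
      rw [← hcmove τ hτlen]
      exact hτeq
    · simp [hfV, Sum.map]
  have hinj : Function.Injective fV := by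
    rw [hfV]
    refine Function.Injective.sumMap ?_ ?_
    · intro a a' h
      exact eA.injective (natE.injective (Subtype.coe_injective (eA.symm.injective h)))
    · intro b b' h
      have hij : idx κ.ord ((embB b : ↥(g ⁻¹' {s₀})) : κ.ord.ToType)
          = idx κ.ord ((embB b' : ↥(g ⁻¹' {s₀})) : κ.ord.ToType) := by
        by_contra hne
        rcases lt_or_gt_of_ne hne with hlt | hlt
        · exact hcolinj _ _ hlt (idx_lt _) h.symm
        · exact hcolinj _ _ hlt (idx_lt _) h
      exact embB.injective (Subtype.ext (idx_inj hij))
  refine ⟨⟨fV, ?_⟩, hinj⟩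
  intro x y hxy
  rcases x with a | b <;> rcases y with a' | b'
  · rw [completeBipartiteGraph_adj] at hxy; simp at hxy
  · exact hAdj a b'
  · exact (hAdj a' b).symm
  · rw [completeBipartiteGraph_adj] at hxy; simp at hxy

end MakerAux

end MakerAux

/-- Let `κ` be a cardinal of uncountable cofinality and assume
every family of at most `κ` infinite subsets of `ℕ` with the strong finite
intersection property has an infinite pseudo-intersection (i.e. `κ < 𝔭`).
Then Maker has a winning strategy in the Maker–Breaker game
`MB(K_{ω,κ}, K_{ω,κ})`. -/
theorem makerWins_completeBipartite_omega_kappa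
    (κ : Cardinal.{0}) (hcf : ℵ₀ < κ.ord.cof)
    (hp : ∀ F : Set (Set ℕ), (∀ A ∈ F, A.Infinite) → #F ≤ κ → HasSFIP F →
      ∃ P : Set ℕ, P.Infinite ∧ ∀ A ∈ F, (P \ A).Finite)
    (A B : Type) (hA : #A = ℵ₀) (hB : #B = κ) :
    MakerWins (completeBipartiteGraph A B) (completeBipartiteGraph A B) := by
  have hκ : ℵ₀ < κ := hcf.trans_le (Ordinal.cof_ord_le κ)
  have hBne : Nonempty B := by
    rw [← Cardinal.mk_ne_zero_iff (α := B)]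
    rw [hB]
    exact ne_of_gt (lt_trans Cardinal.aleph0_pos hκ)
  obtain ⟨eA⟩ : Nonempty (A ≃ ℕ) := by
    rw [← Cardinal.eq]
    rw [hA, Cardinal.mk_nat]
  exact ⟨MakerAux.strat κ hp eA hBne, MakerAux.strat_legal κ hp eA hBne,
    fun p hfol => MakerAux.strat_wins κ hcf hp eA hBne hB p hfol⟩
end

section
/- Assume that every family of at most ℵ₁ infinite subsets of ℕ with the strong finite intersection property has an infinite pseudo-intersection (i.e. ℵ₁ < 𝔭). Then every 2-colouring of the edge set of the complete bipartite graph K_{ω,ω₁} admits a monochromatic copy of K_{ω,ω₁}. -/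
open Cardinal

universe u v

/-- Assume every family of at most `ℵ₁` infinite subsets of `ℕ`
with the strong finite intersection property has an infinite
pseudo-intersection (i.e. `ℵ₁ < 𝔭`).  Then every `2`-colouring of the edge set
of the complete bipartite graph `K_{ω,ω₁}` admits a monochromatic copy of
`K_{ω,ω₁}`. -/
theorem monochromatic_completeBipartite_of_pseudoIntersection
    (hp : ∀ F : Set (Set ℕ), (∀ A ∈ F, A.Infinite) → #F ≤ Cardinal.aleph 1 → HasSFIP F →
      ∃ P : Set ℕ, P.Infinite ∧ ∀ A ∈ F, (P \ A).Finite)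
    (A B : Type) (hA : #A = ℵ₀) (hB : #B = Cardinal.aleph 1)
    (c : (completeBipartiteGraph A B).edgeSet → Bool) :
    ∃ i : Bool,
      ContainsCopy (colourClass (completeBipartiteGraph A B) c i)
        (completeBipartiteGraph A B) := by
  classical
  obtain ⟨e⟩ : Nonempty (A ≃ ℕ) := Cardinal.eq.mp (by rw [hA, Cardinal.mk_nat])
  have hedge : ∀ (a : A) (b : B),
      s(Sum.inl a, Sum.inr b) ∈ (completeBipartiteGraph A B).edgeSet := by
    intro a b; simp [SimpleGraph.mem_edgeSet]
  set χ : ℕ → B → Bool := fun n b => c ⟨s(Sum.inl (e.symm n), Sum.inr b), hedge _ _⟩ with hχ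
  set U := Filter.hyperfilter ℕ with hU
  set S : B → Set ℕ := fun b => {n | χ n b = true} with hS
  set T : B → Set ℕ := fun b => if S b ∈ U then S b else (S b)ᶜ with hT
  have hTU : ∀ b, T b ∈ U := by
    intro b; by_cases h : S b ∈ U
    · simp [hT, h]
    · simp only [hT, h, if_false]
      exact (Ultrafilter.compl_mem_iff_notMem).mpr h
  have hTχ : ∀ b, ∀ n ∈ T b, χ n b = decide (S b ∈ U) := by
    intro b n hn
    by_cases h : S b ∈ U
    · simp only [hT, h, if_true] at hn
      rw [decide_eq_true h]
      exact hn
    · simp only [hT, h, if_false] at hn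
      rw [decide_eq_false h]
      exact Bool.eq_false_iff.mpr hn
  -- apply hp to the range of T
  obtain ⟨P, hPinf, hPT'⟩ := hp (Set.range T)
    (by
      rintro X ⟨b, rfl⟩
      intro hfin
      exact (Filter.notMem_hyperfilter_of_finite hfin) (hTU b))
    (by
      calc #(Set.range T) ≤ #B := Cardinal.mk_range_le
        _ = Cardinal.aleph 1 := hB)
    (by
      intro Sf hSf
      have hmem : ⋂₀ (↑Sf : Set (Set ℕ)) ∈ (U : Filter ℕ) := by
        rw [Filter.sInter_mem Sf.finite_toSet]
        intro t ht
        obtain ⟨b, rfl⟩ := hSf ht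
        exact hTU b
      intro hfin
      exact Filter.notMem_hyperfilter_of_finite hfin hmem)
  have hPT : ∀ b, (P \ T b).Finite := fun b => hPT' _ ⟨b, rfl⟩
  -- pigeonhole
  set g : B → Bool × Finset ℕ := fun b => (decide (S b ∈ U), (hPT b).toFinset) with hg
  have hfib : ∃ y, ¬ (g ⁻¹' {y}).Countable := by
    by_contra h
    push_neg at h
    have huniv : (Set.univ : Set B).Countable := by
      have : (Set.univ : Set B) = ⋃ y : Bool × Finset ℕ, g ⁻¹' {y} := by
        ext b; simp
      rw [this]
      exact Set.countable_iUnion h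
    have : Countable B := Set.countable_univ_iff.mp huniv
    have : #B ≤ ℵ₀ := Cardinal.mk_le_aleph0
    rw [hB] at this
    exact absurd this (not_le.mpr Cardinal.aleph0_lt_aleph_one)
  obtain ⟨⟨i, F₀⟩, hfib⟩ := hfib
  refine ⟨i, ?_⟩
  -- the fiber has cardinality aleph 1
  obtain ⟨eB⟩ : Nonempty (B ≃ (g ⁻¹' {(i, F₀)})) := by
    apply Cardinal.eq.mp
    have h1 : #(g ⁻¹' {(i, F₀)}) ≤ Cardinal.aleph 1 := hB ▸ Cardinal.mk_set_le _
    have h2 : Cardinal.aleph 1 ≤ #(g ⁻¹' {(i, F₀)}) := by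
      by_contra h
      exact hfib ((Cardinal.countable_iff_lt_aleph_one _).mpr (not_le.mp h))
    rw [hB]
    exact le_antisymm h2 h1
  set Q : Set ℕ := P \ ↑F₀ with hQdef
  have hQinf : Q.Infinite := hPinf.diff (F₀.finite_toSet)
  have hQsub : ∀ b ∈ g ⁻¹' {(i, F₀)}, Q ⊆ T b := by
    intro b hb n hn
    simp only [Set.mem_preimage, Set.mem_singleton_iff, hg, Prod.mk.injEq] at hb
    by_contra hnT
    have : n ∈ P \ T b := ⟨hn.1, hnT⟩
    have : n ∈ (↑F₀ : Set ℕ) := by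
      rw [← hb.2] at *
      simpa using (hPT b).mem_toFinset.mpr this
    exact hn.2 this
  have hQi : ∀ b ∈ g ⁻¹' {(i, F₀)}, ∀ n ∈ Q, χ n b = i := by
    intro b hb n hn
    have hdec : decide (S b ∈ U) = i := by
      simp only [Set.mem_preimage, Set.mem_singleton_iff, hg, Prod.mk.injEq] at hb
      exact hb.1
    rw [hTχ b n (hQsub b hb hn), hdec]
  -- build the embedding
  set emb := hQinf.natEmbedding with hemb
  set fL : A → A := fun a => e.symm (emb (e a) : ℕ) with hfL
  set fR : B → B := fun b => (eB b : B) with hfR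
  have hfLQ : ∀ a, e (fL a) ∈ Q := by
    intro a; simp [hfL]
  have key : ∀ (a : A) (b : B),
      (colourClass (completeBipartiteGraph A B) c i).Adj (Sum.inl (fL a)) (Sum.inr (fR b)) := by
    intro a b
    rw [colourClass, SimpleGraph.fromEdgeSet_adj]
    refine ⟨⟨hedge _ _, ?_⟩, by simp⟩
    have := hQi (eB b) (eB b).2 (e (fL a)) (hfLQ a)
    simpa [hχ, hfL, hfR] using this
  refine ⟨⟨Sum.map fL fR, ?_⟩, ?_⟩
  · rintro (a | b) (a' | b') h <;> simp only [completeBipartiteGraph_adj] at h <;>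
      simp at h ⊢
    · exact key a b'
    · exact (key a' b).symm
  · apply Function.Injective.sumMap
    · intro a a' h
      simp only [hfL] at h
      exact e.injective (emb.injective (Subtype.val_injective (e.symm.injective h)))
    · intro b b' h
      exact eB.injective (Subtype.ext h)
end
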